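/- arXiv:2410.16932 — 5 statements merged into one kernel-verified Lean document; each statement's English description precedes it below -/
import Mathlib

section
/- Let G₁ be the subgroup of G generated by {e₁,…,e_k}. For every w ∈ G₁ there exist an element γ of the subgroup ⟨S₁⟩ generated by S₁ and nonnegative integers i₁,…,i_k such that γ·w = e_k^{i_k}·e_{k−1}^{i_{k−1}}⋯e₁^{i₁}. -/
open scoped commutatorElement

/-- The relators `eᵢ^{mᵢ}` defining `G = F_{2n} ∗ ℤ_{m₁} ∗ ⋯ ∗ ℤ_{m_k}`. -/
def Grels (n k : ℕ) (m : ℕ → ℕ) : Set (FreeGroup (Fin k ⊕ Fin (2 * n))) :=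
  Set.range (fun i : Fin k => FreeGroup.of (Sum.inl i) ^ m i.val)

/-- The group `G = ⟨e₁,…,e_k, h₁,…,h_{2n} ∣ e₁^{m₁} = ⋯ = e_k^{m_k} = 1⟩`,
i.e. the free product `F_{2n} ∗ ℤ_{m₁} ∗ ⋯ ∗ ℤ_{m_k}`. -/
abbrev GG (n k : ℕ) (m : ℕ → ℕ) : Type := PresentedGroup (Grels n k m)

/-- The generator `e_{i+1}` of `G` (0-indexed: `ee n k m i` is `e_{i+1}`). -/
def ee (n k : ℕ) (m : ℕ → ℕ) (i : Fin k) : GG n k m := PresentedGroup.of (Sum.inl i)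

/-- The generator `h_{j+1}` of `G` (0-indexed). -/
def hh (n k : ℕ) (m : ℕ → ℕ) (j : Fin (2 * n)) : GG n k m := PresentedGroup.of (Sum.inr j)

/-- The element `α = e₁e₂⋯e_k · [h₁,h₂][h₃,h₄]⋯[h_{2n-1},h_{2n}]` of `G`. -/
def alphaG (n k : ℕ) (m : ℕ → ℕ) : GG n k m :=
  (List.ofFn fun i : Fin k => ee n k m i).prod *
  (List.ofFn fun j : Fin n =>
    ⁅hh n k m ⟨2 * j.val, by have := j.isLt; omega⟩,
      hh n k m ⟨2 * j.val + 1, by have := j.isLt; omega⟩⁆).prod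

/-- The descending product `eChunk u s t = e_t^{u_t} ⋯ e_{s+1}^{u_{s+1}}` (0-indexed:
`e_{t-1}^{u(t-1)} * e_{t-2}^{u(t-2)} * ⋯ * e_s^{u s}`, empty product if `t ≤ s`). -/
def eChunk (n k : ℕ) (m : ℕ → ℕ) (u : ℕ → ℕ) (s : ℕ) : ℕ → GG n k m
  | 0 => 1
  | t + 1 =>
      if s ≤ t then (if h : t < k then ee n k m ⟨t, h⟩ ^ u t else 1) * eChunk n k m u s t
      else 1

/-- The set `S₁ = { g_ξ f_λ g_ξ⁻¹ ∣ 2 ≤ t ≤ k, λ ∈ Λ_t, ξ ∈ Ξ_t }`, where, for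
`λ = (u₁,…,u_t) ∈ Λ_t = (([m₁]×⋯×[m_{t-1}]) ∖ {(m₁,…,m_{t-1})}) × [m_t - 1]` and
`ξ = (u_{t+1},…,u_k) ∈ Ξ_t = [m_{t+1}]×⋯×[m_k]`, one sets
`f_λ = [e_t^{u_t}, e_{t-1}^{u_{t-1}}⋯e₁^{u₁}]` and `g_ξ = e_k^{u_k}⋯e_{t+1}^{u_{t+1}}`.
(Everything is 0-indexed here: `u i` is `u_{i+1}`, and `eChunk u (t-1) t = e_t^{u_t}`.) -/
def S1set (n k : ℕ) (m : ℕ → ℕ) : Set (GG n k m) :=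
  { x | ∃ (t : ℕ) (u : ℕ → ℕ), 2 ≤ t ∧ t ≤ k ∧
      (∀ i < t - 1, 1 ≤ u i ∧ u i ≤ m i) ∧
      (∃ i < t - 1, u i ≠ m i) ∧
      (1 ≤ u (t - 1) ∧ u (t - 1) ≤ m (t - 1) - 1) ∧
      (∀ i, t ≤ i → i < k → 1 ≤ u i ∧ u i ≤ m i) ∧
      x = eChunk n k m u t k *
            ⁅eChunk n k m u (t - 1) t, eChunk n k m u 0 (t - 1)⁆ *
            (eChunk n k m u t k)⁻¹ }

/-- The set `S₂ = { (e_k^{i_k}⋯e₁^{i₁}) h_l (e_k^{i_k}⋯e₁^{i₁})⁻¹ ∣ l ∈ [2n],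
(i₁,…,i_k) ∈ [m₁]×⋯×[m_k] }` (0-indexed). -/
def S2set (n k : ℕ) (m : ℕ → ℕ) : Set (GG n k m) :=
  { x | ∃ (l : Fin (2 * n)) (u : ℕ → ℕ),
      (∀ i < k, 1 ≤ u i ∧ u i ≤ m i) ∧
      x = eChunk n k m u 0 k * hh n k m l * (eChunk n k m u 0 k)⁻¹ }

namespace SortAux

variable (n k : ℕ) (m : ℕ → ℕ)

theorem ee_pow_m (i : Fin k) : ee n k m i ^ m i.val = 1 := by
  have h : FreeGroup.of (Sum.inl i : Fin k ⊕ Fin (2 * n)) ^ m i.val ∈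
      Subgroup.normalClosure (Grels n k m) :=
    Subgroup.subset_normalClosure ⟨i, rfl⟩
  have h2 : (PresentedGroup.mk (Grels n k m)) (FreeGroup.of (Sum.inl i) ^ m i.val) = 1 :=
    (QuotientGroup.eq_one_iff _).2 h
  rw [map_pow] at h2
  exact h2

theorem ee_pow_mod (i : Fin k) (a : ℕ) :
    ee n k m i ^ a = ee n k m i ^ (a % m i.val) := by
  conv_lhs => rw [← Nat.div_add_mod a (m i.val)]
  rw [pow_add, pow_mul, ee_pow_m, one_pow, one_mul]

theorem eChunk_self (u : ℕ → ℕ) (s : ℕ) : eChunk n k m u s s = 1 := by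
  cases s with
  | zero => rfl
  | succ t => simp only [eChunk]; rw [if_neg (by omega)]

theorem eChunk_congr {u v : ℕ → ℕ} (s t : ℕ)
    (h : ∀ i (hi : i < k), s ≤ i → i < t →
      ee n k m ⟨i, hi⟩ ^ u i = ee n k m ⟨i, hi⟩ ^ v i) :
    eChunk n k m u s t = eChunk n k m v s t := by
  induction t with
  | zero => rfl
  | succ t ih =>
    simp only [eChunk]
    split
    · next hst =>
      rw [ih (fun i hi h1 h2 => h i hi h1 (by omega))]
      congr 1
      split
      · next hk' => exact h t hk' hst (by omega)
      · rfl
    · rfl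

theorem eChunk_eq_one {u : ℕ → ℕ} (s t : ℕ) (h : ∀ i, s ≤ i → i < t → u i = 0) :
    eChunk n k m u s t = 1 := by
  induction t with
  | zero => rfl
  | succ t ih =>
    simp only [eChunk]
    split
    · next hst =>
      rw [ih (fun i h1 h2 => h i h1 (by omega)), h t hst (by omega)]
      split <;> simp
    · rfl

theorem eChunk_split (u : ℕ → ℕ) (r s t : ℕ) (hrs : r ≤ s) (hst : s ≤ t) :
    eChunk n k m u s t * eChunk n k m u r s = eChunk n k m u r t := by
  induction t with
  | zero =>
    have hs : s = 0 := by omega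
    have hr : r = 0 := by omega
    subst hs; subst hr
    simp [eChunk_self]
  | succ t ih =>
    by_cases hst' : s ≤ t
    · have h1 : eChunk n k m u s (t + 1) =
          (if h : t < k then ee n k m ⟨t, h⟩ ^ u t else 1) * eChunk n k m u s t := by
        simp only [eChunk, if_pos hst']
      have h2 : eChunk n k m u r (t + 1) =
          (if h : t < k then ee n k m ⟨t, h⟩ ^ u t else 1) * eChunk n k m u r t := by
        simp only [eChunk, if_pos (le_trans hrs hst')]
      rw [h1, h2, mul_assoc, ih hst']
    · have hs : s = t + 1 := by omega
      subst hs
      rw [eChunk_self, one_mul]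

theorem eChunk_single (u : ℕ → ℕ) (j : ℕ) (hj : j < k) :
    eChunk n k m u j (j + 1) = ee n k m ⟨j, hj⟩ ^ u j := by
  have : eChunk n k m u j (j + 1) =
      (if h : j < k then ee n k m ⟨j, h⟩ ^ u j else 1) * eChunk n k m u j j := by
    simp only [eChunk, if_pos (le_refl j)]
  rw [this, eChunk_self, mul_one, dif_pos hj]

theorem eChunk_decomp (u : ℕ → ℕ) (J : ℕ) (hJ : J < k) :
    eChunk n k m u 0 k =
      eChunk n k m u (J + 1) k * ee n k m ⟨J, hJ⟩ ^ u J * eChunk n k m u 0 J := by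
  rw [← eChunk_split n k m u 0 (J + 1) k (by omega) (by omega),
      ← eChunk_split n k m u 0 J (J + 1) (by omega) (by omega),
      eChunk_single n k m u J hJ, mul_assoc]

theorem key_step (n k : ℕ) (m : ℕ → ℕ) (hm : ∀ i < k, 2 ≤ m i) (u : ℕ → ℕ) (j : Fin k) :
    ∃ γ ∈ Subgroup.closure (S1set n k m), ∃ u' : ℕ → ℕ,
      γ * (eChunk n k m u 0 k * ee n k m j) = eChunk n k m u' 0 k := by
  obtain ⟨J, hJ⟩ := j
  -- reduce exponents mod m
  obtain ⟨v, hvlt, hred⟩ : ∃ v : ℕ → ℕ, (∀ i, i < k → v i < m i) ∧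
      eChunk n k m u 0 k = eChunk n k m v 0 k := by
    refine ⟨fun i => u i % m i, fun i hi => Nat.mod_lt _ (by have := hm i hi; omega), ?_⟩
    exact eChunk_congr n k m 0 k (fun i hi _ _ => ee_pow_mod n k m ⟨i, hi⟩ (u i))
  have hdecv := eChunk_decomp n k m v J hJ
  obtain ⟨u', hu'J, hu'ne⟩ : ∃ u' : ℕ → ℕ, u' J = v J + 1 ∧ ∀ i, i ≠ J → u' i = v i :=
    ⟨fun i => if i = J then v J + 1 else v i, by simp, fun i hi => by simp [hi]⟩
  have hdec' := eChunk_decomp n k m u' J hJ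
  have hA' : eChunk n k m u' (J + 1) k = eChunk n k m v (J + 1) k :=
    eChunk_congr n k m _ _ (fun i hi h1 h2 => by rw [hu'ne i (by omega)])
  have hB' : eChunk n k m u' 0 J = eChunk n k m v 0 J :=
    eChunk_congr n k m _ _ (fun i hi h1 h2 => by rw [hu'ne i (by omega)])
  rw [hu'J, hA', hB'] at hdec'
  by_cases hz : ∀ i, i < J → v i = 0
  · -- no inversions: just multiply in
    refine ⟨1, one_mem _, u', ?_⟩
    have hB : eChunk n k m v 0 J = 1 := eChunk_eq_one n k m 0 J (fun i _ h2 => hz i h2)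
    rw [one_mul, hred, hdecv, hdec', hB, mul_one, mul_one, pow_succ, mul_assoc]
  · push_neg at hz
    obtain ⟨i0, hi0J, hi0⟩ := hz
    -- adjusted exponents for the S₁ witnesses
    obtain ⟨wb, hwb⟩ : ∃ w : ℕ → ℕ, ∀ i, i < k →
        (1 ≤ w i ∧ w i ≤ m i) ∧ (∀ hi : i < k, ee n k m ⟨i, hi⟩ ^ w i = ee n k m ⟨i, hi⟩ ^ v i)
          ∧ (v i ≠ 0 → w i = v i) := by
      refine ⟨fun i => if v i = 0 then m i else v i, fun i hi => ?_⟩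
      rcases eq_or_ne (v i) 0 with h | h
      · have h2 := hm i hi
        refine ⟨⟨by simp [h]; omega, by simp [h]⟩, fun hi' => ?_, fun hne => absurd h hne⟩
        simp only [h, ite_true, pow_zero]
        simpa using ee_pow_m n k m ⟨i, hi'⟩
      · exact ⟨⟨by simp [h]; omega, by simp [h]; exact (hvlt i hi).le⟩,
          fun hi' => by simp [h], fun _ => by simp [h]⟩
    set A := eChunk n k m v (J + 1) k with hA
    set B := eChunk n k m v 0 J with hB
    set xe := ee n k m ⟨J, hJ⟩ with hxe
    have hmem : ∀ c, c ≤ m J → A * ⁅xe ^ c, B⁆ * A⁻¹ ∈ Subgroup.closure (S1set n k m) := by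
      intro c hc
      rcases Nat.eq_zero_or_pos c with rfl | hc1
      · rw [pow_zero, commutatorElement_one_left, mul_one, mul_inv_cancel]
        exact one_mem _
      by_cases hcm : c = m J
      · have : xe ^ c = 1 := by rw [hcm]; exact ee_pow_m n k m ⟨J, hJ⟩
        rw [this, commutatorElement_one_left, mul_one, mul_inv_cancel]
        exact one_mem _
      apply Subgroup.subset_closure
      obtain ⟨wc, hwcJ, hwcne⟩ : ∃ wc : ℕ → ℕ, wc J = c ∧ ∀ i, i ≠ J → wc i = wb i :=
        ⟨fun i => if i = J then c else wb i, by simp, fun i hi => by simp [hi]⟩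
      have hwcA : eChunk n k m wc (J + 1) k = A :=
        eChunk_congr n k m _ _ (fun i hi h1 h2 => by
          rw [hwcne i (by omega)]; exact (hwb i hi).2.1 hi)
      have hwcB : eChunk n k m wc 0 J = B :=
        eChunk_congr n k m _ _ (fun i hi h1 h2 => by
          rw [hwcne i (by omega)]; exact (hwb i hi).2.1 hi)
      have hwcs : eChunk n k m wc J (J + 1) = xe ^ c := by
        rw [eChunk_single n k m wc J hJ, hwcJ]
      refine ⟨J + 1, wc, by omega, by omega, ?_, ?_, ?_, ?_, ?_⟩
      · intro i hi
        have hik : i < k := by omega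
        rw [hwcne i (by omega)]
        exact (hwb i hik).1
      · refine ⟨i0, by omega, ?_⟩
        rw [hwcne i0 (by omega), (hwb i0 (by omega)).2.2 hi0]
        have := hvlt i0 (by omega)
        omega
      · simp only [Nat.add_sub_cancel]
        rw [hwcJ]
        omega
      · intro i h1 h2
        rw [hwcne i (by omega)]
        exact (hwb i h2).1
      · simp only [Nat.add_sub_cancel]
        rw [hwcA, hwcB, hwcs]
    refine ⟨(A * ⁅xe ^ (v J + 1), B⁆ * A⁻¹) * (A * ⁅xe ^ v J, B⁆ * A⁻¹)⁻¹,
      mul_mem (hmem _ (by have := hvlt J hJ; omega))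
        (inv_mem (hmem _ (by have := hvlt J hJ; omega))), u', ?_⟩
    rw [hred, hdecv, hdec']
    simp only [commutatorElement_def, pow_succ]
    group



theorem mem_submonoid_closure (n k : ℕ) (m : ℕ → ℕ) (hm : ∀ i < k, 2 ≤ m i) :
    ∀ w ∈ Subgroup.closure (Set.range (ee n k m)),
      w ∈ Submonoid.closure (Set.range (ee n k m)) := by
  have hinv : ∀ x ∈ Submonoid.closure (Set.range (ee n k m)),
      x⁻¹ ∈ Submonoid.closure (Set.range (ee n k m)) := by
    intro x hx
    induction hx using Submonoid.closure_induction with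
    | one => simpa using one_mem _
    | mul a b _ _ ha hb => rw [mul_inv_rev]; exact mul_mem hb ha
    | mem y hy =>
      obtain ⟨i, rfl⟩ := hy
      have h1 : ee n k m i ^ (m i.val - 1) * ee n k m i = 1 := by
        rw [← pow_succ]
        have h2 : m i.val - 1 + 1 = m i.val := by have := hm i.val i.isLt; omega
        rw [h2, ee_pow_m]
      rw [inv_eq_of_mul_eq_one_left h1]
      exact pow_mem (Submonoid.subset_closure (Set.mem_range_self i)) _
  intro w hw
  induction hw using Subgroup.closure_induction with
  | mem y hy => exact Submonoid.subset_closure hy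
  | one => exact one_mem _
  | mul a b _ _ ha hb => exact mul_mem ha hb
  | inv a _ ha => exact hinv a ha

end SortAux

/-- **Lemma 3.6.** For every `w` in the subgroup `G₁ = ⟨e₁,…,e_k⟩` of `G`, there are
`γ ∈ ⟨S₁⟩` and nonnegative integers `i₁,…,i_k` with `γ·w = e_k^{i_k}⋯e₁^{i₁}`. -/
theorem sort_in_G1 (n k : ℕ) (m : ℕ → ℕ) (hk : 1 ≤ k) (hm : ∀ i < k, 2 ≤ m i) :
    ∀ w ∈ Subgroup.closure (Set.range (ee n k m)),
      ∃ γ ∈ Subgroup.closure (S1set n k m), ∃ u : ℕ → ℕ,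
        γ * w = eChunk n k m u 0 k := by
  intro w hw
  have hw' := SortAux.mem_submonoid_closure n k m hm w hw
  clear hw
  induction hw' using Submonoid.closure_induction_right with
  | one =>
    refine ⟨1, one_mem _, fun _ => 0, ?_⟩
    rw [mul_one]
    exact (SortAux.eChunk_eq_one n k m 0 k (fun _ _ _ => rfl)).symm
  | mul_right x hx y hy ih =>
    obtain ⟨γ, hγ, u, hu⟩ := ih
    obtain ⟨i, rfl⟩ := hy
    obtain ⟨γ', hγ', u', hu'⟩ := SortAux.key_step n k m hm u i
    refine ⟨γ' * γ, mul_mem hγ' hγ, u', ?_⟩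
    rw [show γ' * γ * (x * ee n k m i) = γ' * (γ * x * ee n k m i) by group, hu, hu']
end

section
/- For every g ∈ G there exist an element f of the subgroup F = ⟨S₁ ∪ S₂⟩ and nonnegative integers i₁,…,i_k such that f·g = e_k^{i_k}·e_{k−1}^{i_{k−1}}⋯e₁^{i₁}. -/
open scoped commutatorElement

section Lemmas

variable {n k : ℕ} {m : ℕ → ℕ}

theorem ee_pow_m (i : Fin k) : ee n k m i ^ (m i.val) = 1 := by
  show ((QuotientGroup.mk (FreeGroup.of (Sum.inl i)) : GG n k m)) ^ (m i.val) = 1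
  rw [← QuotientGroup.mk_pow, QuotientGroup.eq_one_iff]
  exact Subgroup.subset_normalClosure ⟨i, rfl⟩

theorem ee_pow_mod (i : Fin k) (a : ℕ) :
    ee n k m i ^ a = ee n k m i ^ (a % m i.val) := by
  conv_lhs => rw [← Nat.div_add_mod a (m i.val)]
  rw [pow_add, pow_mul, ee_pow_m, one_pow, one_mul]

/-- canonical exponent in `[1, M]`. -/
def normExp (a M : ℕ) : ℕ := if a % M = 0 then M else a % M

theorem ee_pow_norm (i : Fin k) (a : ℕ) :
    ee n k m i ^ a = ee n k m i ^ (normExp a (m i.val)) := by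
  unfold normExp
  split
  · rw [ee_pow_mod, ‹a % m i.val = 0›, pow_zero, ee_pow_m]
  · exact ee_pow_mod i a

theorem eChunk_succ (u : ℕ → ℕ) (s t : ℕ) : eChunk n k m u s (t+1) =
    if s ≤ t then (if h : t < k then ee n k m ⟨t, h⟩ ^ u t else 1) * eChunk n k m u s t
    else 1 := rfl

theorem eChunk_of_le (u : ℕ → ℕ) {s t : ℕ} (h : t ≤ s) : eChunk n k m u s t = 1 := by
  cases t with
  | zero => rfl
  | succ t => rw [eChunk_succ, if_neg (by omega)]

theorem eChunk_single (u : ℕ → ℕ) (t : Fin k) :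
    eChunk n k m u t.val (t.val + 1) = ee n k m t ^ u t.val := by
  rw [eChunk_succ, if_pos le_rfl, dif_pos t.isLt, eChunk_of_le u le_rfl, mul_one, Fin.eta]

theorem eChunk_eq_of_pow (u v : ℕ → ℕ) (s : ℕ) :
    ∀ t, (∀ i (hi : i < k), s ≤ i → i < t →
      ee n k m ⟨i, hi⟩ ^ u i = ee n k m ⟨i, hi⟩ ^ v i) →
    eChunk n k m u s t = eChunk n k m v s t := by
  intro t
  induction t with
  | zero => intro _; rfl
  | succ t ih =>
    intro h
    rw [eChunk_succ, eChunk_succ, ih (fun i hi h1 h2 => h i hi h1 (by omega))]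
    by_cases hst : s ≤ t
    · rw [if_pos hst, if_pos hst]
      by_cases htk : t < k
      · rw [dif_pos htk, dif_pos htk, h t htk hst (by omega)]
      · rw [dif_neg htk, dif_neg htk]
    · rw [if_neg hst, if_neg hst]

theorem eChunk_congr (u v : ℕ → ℕ) (s t : ℕ) (h : ∀ i, s ≤ i → i < t → u i = v i) :
    eChunk n k m u s t = eChunk n k m v s t :=
  eChunk_eq_of_pow u v s t (fun i hi h1 h2 => by rw [h i h1 h2])

theorem eChunk_eq_one (u : ℕ → ℕ) (s : ℕ) :
    ∀ t, (∀ i (hi : i < k), s ≤ i → i < t → ee n k m ⟨i, hi⟩ ^ u i = 1) →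
    eChunk n k m u s t = 1 := by
  intro t
  induction t with
  | zero => intro _; rfl
  | succ t ih =>
    intro h
    rw [eChunk_succ]
    by_cases hst : s ≤ t
    · rw [if_pos hst, ih (fun i hi h1 h2 => h i hi h1 (by omega))]
      by_cases htk : t < k
      · rw [dif_pos htk, h t htk hst (by omega), one_mul]
      · rw [dif_neg htk, one_mul]
    · rw [if_neg hst]

theorem eChunk_split (u : ℕ → ℕ) {s r : ℕ} (h1 : s ≤ r) :
    ∀ t, r ≤ t → eChunk n k m u s t = eChunk n k m u r t * eChunk n k m u s r := by
  intro t
  induction t with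
  | zero =>
    intro ht
    have hr : r = 0 := by omega
    subst hr
    rw [show eChunk n k m u 0 0 = 1 from rfl, one_mul]
  | succ t ih =>
    intro ht
    by_cases hrt : r ≤ t
    · rw [eChunk_succ, eChunk_succ, if_pos (by omega), if_pos hrt, ih hrt, mul_assoc]
    · have : r = t + 1 := by omega
      subst this
      rw [eChunk_of_le u le_rfl, one_mul]

end Lemmas

section Main

variable {n k : ℕ} {m : ℕ → ℕ}

theorem mem_F_conj (hm : ∀ i < k, 2 ≤ m i) (t : Fin k) (v : ℕ → ℕ)
    (hv : ∀ i < k, 1 ≤ v i ∧ v i ≤ m i) (a : ℕ) :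
    eChunk n k m v (t.val + 1) k * ⁅ee n k m t ^ a, eChunk n k m v 0 t.val⁆ *
      (eChunk n k m v (t.val + 1) k)⁻¹ ∈
      Subgroup.closure (S1set n k m ∪ S2set n k m) := by
  by_cases h0 : a % m t.val = 0
  · have hE : ee n k m t ^ a = 1 := by
      rw [ee_pow_mod, h0, pow_zero]
    rw [hE, commutatorElement_one_left, mul_one, mul_inv_cancel]
    exact one_mem _
  by_cases hall : ∀ i < t.val, v i = m i
  · have hB : eChunk n k m v 0 t.val = 1 := by
      apply eChunk_eq_one
      intro i hi _ h2
      rw [hall i h2, ee_pow_m]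
    rw [hB, commutatorElement_one_right, mul_one, mul_inv_cancel]
    exact one_mem _
  · push_neg at hall
    obtain ⟨i0, hi0t, hi0⟩ := hall
    set w : ℕ → ℕ := fun i => if i = t.val then a % m t.val else v i with hw
    have hwt : w t.val = a % m t.val := by simp [hw]
    have hwi : ∀ i, i ≠ t.val → w i = v i := by intro i hi; simp [hw, hi]
    apply Subgroup.subset_closure
    left
    refine ⟨t.val + 1, w, by omega, by omega, ?_, ?_, ?_, ?_, ?_⟩
    · intro i hi
      rw [hwi i (by omega)]
      exact hv i (by omega)
    · exact ⟨i0, by omega, by rw [hwi i0 (by omega)]; simpa using hi0⟩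
    · have h1 : a % m t.val < m t.val := Nat.mod_lt _ (by have := hm t.val t.isLt; omega)
      simp only [Nat.add_sub_cancel, hwt]
      omega
    · intro i h1 h2
      rw [hwi i (by omega)]
      exact hv i h2
    · simp only [Nat.add_sub_cancel]
      have e1 : eChunk n k m w (t.val + 1) k = eChunk n k m v (t.val + 1) k :=
        eChunk_congr _ _ _ _ (fun i h1 _ => hwi i (by omega))
      have e2 : eChunk n k m w 0 t.val = eChunk n k m v 0 t.val :=
        eChunk_congr _ _ _ _ (fun i _ h2 => hwi i (by omega))
      have e3 : eChunk n k m w t.val (t.val + 1) = ee n k m t ^ a := by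
        rw [eChunk_single, hwt, ← ee_pow_mod]
      rw [e1, e2, e3]

theorem sort_step (hm : ∀ i < k, 2 ≤ m i) (t : Fin k) (u : ℕ → ℕ) :
    ∃ f ∈ Subgroup.closure (S1set n k m ∪ S2set n k m), ∃ u' : ℕ → ℕ,
      f * (eChunk n k m u 0 k * ee n k m t) = eChunk n k m u' 0 k := by
  set v : ℕ → ℕ := fun i => normExp (u i) (m i) with hvdef
  have hv : ∀ i < k, 1 ≤ v i ∧ v i ≤ m i := by
    intro i hi
    have h2 := hm i hi
    simp only [hvdef, normExp]
    split
    · omega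
    · have := Nat.mod_lt (u i) (y := m i) (by omega)
      omega
  have hCv : eChunk n k m u 0 k = eChunk n k m v 0 k := by
    apply eChunk_eq_of_pow
    intro i hi _ _
    exact ee_pow_norm ⟨i, hi⟩ (u i)
  set u' : ℕ → ℕ := fun i => if i = t.val then v t.val + 1 else v i with hu'def
  have hu't : u' t.val = v t.val + 1 := by simp [hu'def]
  have hu'i : ∀ i, i ≠ t.val → u' i = v i := by intro i hi; simp [hu'def, hi]
  refine ⟨eChunk n k m u' 0 k * (ee n k m t)⁻¹ * (eChunk n k m v 0 k)⁻¹, ?_, u', by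
    rw [hCv]; group⟩
  -- membership
  set A := eChunk n k m v (t.val + 1) k with hA
  set B := eChunk n k m v 0 t.val with hB
  set E := ee n k m t with hE
  have splitv : eChunk n k m v 0 k = A * E ^ v t.val * B := by
    rw [eChunk_split v (s := 0) (r := t.val + 1) (by omega) k (by omega),
      eChunk_split v (s := 0) (r := t.val) (by omega) (t.val + 1) (by omega), eChunk_single]
    simp only [hA, hB, hE, mul_assoc]
  have splitu' : eChunk n k m u' 0 k = A * E ^ (v t.val + 1) * B := by
    rw [eChunk_split u' (s := 0) (r := t.val + 1) (by omega) k (by omega),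
      eChunk_split u' (s := 0) (r := t.val) (by omega) (t.val + 1) (by omega), eChunk_single, hu't]
    have e1 : eChunk n k m u' (t.val + 1) k = A :=
      eChunk_congr _ _ _ _ (fun i h1 _ => hu'i i (by omega))
    have e2 : eChunk n k m u' 0 t.val = B :=
      eChunk_congr _ _ _ _ (fun i _ h2 => hu'i i (by omega))
    rw [e1, e2]
    simp only [hE, mul_assoc]
  have key : eChunk n k m u' 0 k * (ee n k m t)⁻¹ * (eChunk n k m v 0 k)⁻¹ =
      (A * ⁅E ^ (v t.val + 1), B⁆ * A⁻¹) * (A * ⁅E ^ v t.val, B⁆ * A⁻¹)⁻¹ := by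
    rw [splitv, splitu', ← hE]
    simp only [commutatorElement_def, pow_succ]
    group
  rw [key]
  exact mul_mem (mem_F_conj hm t v hv _) (inv_mem (mem_F_conj hm t v hv _))

theorem sort_pow (hm : ∀ i < k, 2 ≤ m i) (t : Fin k) (u : ℕ → ℕ) (a : ℕ) :
    ∃ f ∈ Subgroup.closure (S1set n k m ∪ S2set n k m), ∃ u' : ℕ → ℕ,
      f * (eChunk n k m u 0 k * ee n k m t ^ a) = eChunk n k m u' 0 k := by
  induction a with
  | zero => exact ⟨1, one_mem _, u, by rw [pow_zero, mul_one, one_mul]⟩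
  | succ a ih =>
    obtain ⟨f1, hf1, u1, h1⟩ := ih
    obtain ⟨f2, hf2, u2, h2⟩ := sort_step hm t u1
    refine ⟨f2 * f1, mul_mem hf2 hf1, u2, ?_⟩
    calc f2 * f1 * (eChunk n k m u 0 k * ee n k m t ^ (a + 1))
        = f2 * (f1 * (eChunk n k m u 0 k * ee n k m t ^ a) * ee n k m t) := by
          rw [pow_succ]; group
      _ = f2 * (eChunk n k m u1 0 k * ee n k m t) := by rw [h1]
      _ = eChunk n k m u2 0 k := h2

theorem sort_h (hm : ∀ i < k, 2 ≤ m i) (j : Fin (2 * n)) (u : ℕ → ℕ) (c : GG n k m)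
    (hc : c = hh n k m j ∨ c = (hh n k m j)⁻¹) :
    ∃ f ∈ Subgroup.closure (S1set n k m ∪ S2set n k m), ∃ u' : ℕ → ℕ,
      f * (eChunk n k m u 0 k * c) = eChunk n k m u' 0 k := by
  set v : ℕ → ℕ := fun i => normExp (u i) (m i) with hvdef
  have hv : ∀ i < k, 1 ≤ v i ∧ v i ≤ m i := by
    intro i hi
    have h2 := hm i hi
    simp only [hvdef, normExp]
    split
    · omega
    · have := Nat.mod_lt (u i) (y := m i) (by omega)
      omega
  have hCv : eChunk n k m u 0 k = eChunk n k m v 0 k := by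
    apply eChunk_eq_of_pow
    intro i hi _ _
    exact ee_pow_norm ⟨i, hi⟩ (u i)
  have hmem : eChunk n k m v 0 k * hh n k m j * (eChunk n k m v 0 k)⁻¹ ∈
      Subgroup.closure (S1set n k m ∪ S2set n k m) :=
    Subgroup.subset_closure (Or.inr ⟨j, v, hv, rfl⟩)
  rcases hc with rfl | rfl
  · refine ⟨(eChunk n k m v 0 k * hh n k m j * (eChunk n k m v 0 k)⁻¹)⁻¹, inv_mem hmem,
      v, ?_⟩
    rw [hCv]; group
  · refine ⟨eChunk n k m v 0 k * hh n k m j * (eChunk n k m v 0 k)⁻¹, hmem, v, ?_⟩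
    rw [hCv]; group

end Main

/-- **Lemma 3.7.** For every `g ∈ G` there are `f ∈ F = ⟨S₁ ∪ S₂⟩` and nonnegative
integers `i₁,…,i_k` with `f·g = e_k^{i_k}⋯e₁^{i₁}`. -/
theorem sort_in_G (n k : ℕ) (m : ℕ → ℕ) (hk : 1 ≤ k) (hm : ∀ i < k, 2 ≤ m i) :
    ∀ g : GG n k m,
      ∃ f ∈ Subgroup.closure (S1set n k m ∪ S2set n k m), ∃ u : ℕ → ℕ,
        f * g = eChunk n k m u 0 k := by
  intro g
  have hg : g ∈ Subgroup.closure
      (Set.range (PresentedGroup.of : (Fin k ⊕ Fin (2 * n)) → GG n k m)) := by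
    rw [PresentedGroup.closure_range_of]
    exact Subgroup.mem_top g
  induction hg using Subgroup.closure_induction_right with
  | one =>
    refine ⟨1, one_mem _, fun _ => 0, ?_⟩
    rw [mul_one, eChunk_eq_one _ _ _ (fun i hi _ _ => pow_zero _)]
  | mul_right x hx y hy ih =>
    obtain ⟨f1, hf1, u1, h1⟩ := ih
    obtain ⟨z, rfl⟩ := hy
    have step : ∃ f2 ∈ Subgroup.closure (S1set n k m ∪ S2set n k m), ∃ u2 : ℕ → ℕ,
        f2 * (eChunk n k m u1 0 k * PresentedGroup.of z) = eChunk n k m u2 0 k := by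
      cases z with
      | inl t =>
        obtain ⟨f2, hf2, u2, h2⟩ := sort_step hm t u1
        exact ⟨f2, hf2, u2, h2⟩
      | inr j => exact sort_h hm j u1 _ (Or.inl rfl)
    obtain ⟨f2, hf2, u2, h2⟩ := step
    refine ⟨f2 * f1, mul_mem hf2 hf1, u2, ?_⟩
    calc f2 * f1 * (x * PresentedGroup.of z)
        = f2 * (f1 * x * PresentedGroup.of z) := by group
      _ = f2 * (eChunk n k m u1 0 k * PresentedGroup.of z) := by rw [h1]
      _ = eChunk n k m u2 0 k := h2
  | mul_inv_cancel x hx y hy ih =>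
    obtain ⟨f1, hf1, u1, h1⟩ := ih
    obtain ⟨z, rfl⟩ := hy
    have step : ∃ f2 ∈ Subgroup.closure (S1set n k m ∪ S2set n k m), ∃ u2 : ℕ → ℕ,
        f2 * (eChunk n k m u1 0 k * (PresentedGroup.of z)⁻¹) = eChunk n k m u2 0 k := by
      cases z with
      | inl t =>
        have hinv : (PresentedGroup.of (Sum.inl t) : GG n k m)⁻¹
            = ee n k m t ^ (m t.val - 1) := by
          rw [inv_eq_iff_mul_eq_one]
          have h2 := hm t.val t.isLt
          have : (ee n k m t : GG n k m) * ee n k m t ^ (m t.val - 1)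
              = ee n k m t ^ m t.val := by
            rw [← pow_succ']
            congr 1
            omega
          show (ee n k m t : GG n k m) * ee n k m t ^ (m t.val - 1) = 1
          rw [this, ee_pow_m]
        rw [hinv]
        exact sort_pow hm t u1 _
      | inr j => exact sort_h hm j u1 _ (Or.inr rfl)
    obtain ⟨f2, hf2, u2, h2⟩ := step
    refine ⟨f2 * f1, mul_mem hf2 hf1, u2, ?_⟩
    calc f2 * f1 * (x * (PresentedGroup.of z)⁻¹)
        = f2 * (f1 * x * (PresentedGroup.of z)⁻¹) := by group
      _ = f2 * (eChunk n k m u1 0 k * (PresentedGroup.of z)⁻¹) := by rw [h1]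
      _ = eChunk n k m u2 0 k := h2
end

section
/- The elements e_k^{i_k}·e_{k−1}^{i_{k−1}}⋯e₁^{i₁}, for (i₁,…,i_k) ∈ [m₁]×⋯×[m_k], form a complete set of representatives of the right coset space F\G: every g ∈ G lies in exactly one coset F·(e_k^{i_k}⋯e₁^{i₁}), i.e., the map (i₁,…,i_k) ↦ F·e_k^{i_k}⋯e₁^{i₁} is a bijection from [m₁]×⋯×[m_k] onto the set of right cosets of F in G. -/
open scoped commutatorElement

namespace CH

variable {n k : ℕ} {m : ℕ → ℕ}

lemma ee_pow (i : Fin k) : ee n k m i ^ m i.val = 1 := by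
  have h : (FreeGroup.of (Sum.inl i) ^ m i.val : FreeGroup (Fin k ⊕ Fin (2*n))) ∈
      Subgroup.normalClosure (Grels n k m) :=
    Subgroup.subset_normalClosure ⟨i, rfl⟩
  show (PresentedGroup.mk _ (FreeGroup.of (Sum.inl i)) : GG n k m) ^ m i.val = 1
  rw [← map_pow]
  exact (QuotientGroup.eq_one_iff _).mpr h

lemma eChunk_self (u : ℕ → ℕ) (s : ℕ) : eChunk n k m u s s = 1 := by
  cases s with
  | zero => rfl
  | succ t => simp [eChunk]

lemma eChunk_succ (u : ℕ → ℕ) {s t : ℕ} (h : s ≤ t) :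
    eChunk n k m u s (t+1) =
      (if ht : t < k then ee n k m ⟨t, ht⟩ ^ u t else 1) * eChunk n k m u s t := by
  simp [eChunk, h]

lemma eChunk_of_gt (u : ℕ → ℕ) {s t : ℕ} (h : ¬ s ≤ t) :
    eChunk n k m u s (t+1) = 1 := by
  simp [eChunk, h]

lemma eChunk_split (u : ℕ → ℕ) {r s t : ℕ} (h1 : r ≤ s) (h2 : s ≤ t) :
    eChunk n k m u s t * eChunk n k m u r s = eChunk n k m u r t := by
  induction t with
  | zero =>
    have hs : s = 0 := by omega
    subst hs
    rw [eChunk_self, one_mul]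
  | succ t ih =>
    rcases eq_or_lt_of_le h2 with rfl | h2'
    · rw [eChunk_self, one_mul]
    · have hst : s ≤ t := by omega
      rw [eChunk_succ u hst, eChunk_succ u (h1.trans hst), mul_assoc, ih hst]

lemma eChunk_congr {u v : ℕ → ℕ} (s t : ℕ) (h : ∀ i, s ≤ i → i < t → u i = v i) :
    eChunk n k m u s t = eChunk n k m v s t := by
  induction t with
  | zero => rfl
  | succ t ih =>
    by_cases hst : s ≤ t
    · rw [eChunk_succ u hst, eChunk_succ v hst,
        ih (fun i h1 h2 => h i h1 (by omega)), h t hst (by omega)]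
    · rw [eChunk_of_gt u hst, eChunk_of_gt v hst]

lemma eChunk_single (u : ℕ → ℕ) {t : ℕ} (ht : t < k) :
    eChunk n k m u t (t+1) = ee n k m ⟨t, ht⟩ ^ u t := by
  rw [eChunk_succ u le_rfl, dif_pos ht, eChunk_self, mul_one]

lemma eChunk_eq_one (u : ℕ → ℕ) (s t : ℕ) (h : ∀ i, s ≤ i → i < t → u i = m i) :
    eChunk n k m u s t = 1 := by
  induction t with
  | zero => rfl
  | succ t ih =>
    by_cases hst : s ≤ t
    · rw [eChunk_succ u hst, ih (fun i h1 h2 => h i h1 (by omega))]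
      rcases Nat.lt_or_ge t k with htk | htk
      · rw [dif_pos htk, h t hst (by omega)]
        rw [mul_one]
        exact ee_pow ⟨t, htk⟩
      · rw [dif_neg (by omega), mul_one]
    · exact eChunk_of_gt u hst


noncomputable section

def phiF (n k : ℕ) (m : ℕ → ℕ) : (Fin k ⊕ Fin (2 * n)) →
    (∀ i : Fin k, Multiplicative (ZMod (m i.val))) :=
  Sum.elim (fun i => Pi.mulSingle i (Multiplicative.ofAdd (1 : ZMod (m i.val)))) (fun _ => 1)

lemma phiF_rels : ∀ r ∈ Grels n k m, FreeGroup.lift (phiF n k m) r = 1 := by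
  rintro r ⟨i, rfl⟩
  rw [map_pow, FreeGroup.lift_apply_of]
  simp only [phiF, Sum.elim_inl]
  rw [← Pi.mulSingle_pow]
  have h1 : (Multiplicative.ofAdd (1 : ZMod (m i.val))) ^ m i.val = 1 := by
    rw [← ofAdd_nsmul, nsmul_eq_mul, mul_one, ZMod.natCast_self, ofAdd_zero]
  rw [h1, Pi.mulSingle_one]

def phi : GG n k m →* (∀ i : Fin k, Multiplicative (ZMod (m i.val))) :=
  PresentedGroup.toGroup phiF_rels

lemma phi_ee (i : Fin k) : phi (ee n k m i) =
    Pi.mulSingle i (Multiplicative.ofAdd (1 : ZMod (m i.val))) :=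
  PresentedGroup.toGroup.of phiF_rels

lemma phi_hh (j : Fin (2 * n)) : phi (hh n k m j) = 1 :=
  PresentedGroup.toGroup.of phiF_rels

lemma phi_eChunk (u : ℕ → ℕ) (s t : ℕ) (i : Fin k) :
    phi (eChunk n k m u s t) i =
      if s ≤ i.val ∧ i.val < t then Multiplicative.ofAdd (u i.val : ZMod (m i.val)) else 1 := by
  induction t with
  | zero =>
    rw [show eChunk n k m u s 0 = 1 from rfl, map_one, Pi.one_apply, if_neg (by omega)]
  | succ t ih =>
    by_cases hst : s ≤ t
    · rw [eChunk_succ u hst, map_mul, Pi.mul_apply, ih]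
      by_cases hik : i.val = t
      · have htk : t < k := hik ▸ i.isLt
        have hieq : i = ⟨t, htk⟩ := Fin.ext hik
        subst hieq
        rw [dif_pos htk, map_pow, phi_ee, ← Pi.mulSingle_pow, if_neg (by omega), mul_one,
          Pi.mulSingle_eq_same, if_pos ⟨hst, by omega⟩, ← ofAdd_nsmul, nsmul_eq_mul, mul_one]
      · have h1 : (phi (if ht : t < k then ee n k m ⟨t, ht⟩ ^ u t else 1)) i = 1 := by
          rcases Nat.lt_or_ge t k with htk | htk
          · rw [dif_pos htk, map_pow, phi_ee, ← Pi.mulSingle_pow,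
              Pi.mulSingle_eq_of_ne (Fin.ne_of_val_ne hik)]
          · rw [dif_neg (by omega), map_one, Pi.one_apply]
        rw [h1, one_mul]
        exact if_congr (by omega) rfl rfl
    · rw [eChunk_of_gt u hst, map_one, Pi.one_apply, if_neg (by omega)]

lemma phi_rep (u : ℕ → ℕ) (i : Fin k) :
    phi (eChunk n k m u 0 k) i = Multiplicative.ofAdd (u i.val : ZMod (m i.val)) := by
  rw [phi_eChunk, if_pos ⟨Nat.zero_le _, i.isLt⟩]


lemma F_le_ker :
    Subgroup.closure (S1set n k m ∪ S2set n k m) ≤ (phi (n:=n) (k:=k) (m:=m)).ker := by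
  rw [Subgroup.closure_le]
  rintro x (⟨t, u, h1, h2, h3, h4, h5, h6, rfl⟩ | ⟨l, u, h1, rfl⟩)
  · have hc : phi ⁅eChunk n k m u (t - 1) t, eChunk n k m u 0 (t - 1)⁆ = 1 := by
      rw [map_commutatorElement]
      exact commutatorElement_eq_one_iff_commute.mpr (Commute.all _ _)
    simp only [SetLike.mem_coe, MonoidHom.mem_ker, map_mul, map_inv, hc, mul_one,
      mul_inv_cancel]
  · simp only [SetLike.mem_coe, MonoidHom.mem_ker, map_mul, map_inv, phi_hh, mul_one,
      mul_inv_cancel]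

lemma nat_eq_of_modEq {a b c : ℕ} (h : a ≡ b [MOD c]) (ha1 : 1 ≤ a) (ha2 : a ≤ c)
    (hb1 : 1 ≤ b) (hb2 : b ≤ c) : a = b := by
  rcases lt_trichotomy a b with h' | h' | h'
  · have hd := (Nat.modEq_iff_dvd' h'.le).mp h
    have := Nat.le_of_dvd (by omega) hd
    omega
  · exact h'
  · have hd := (Nat.modEq_iff_dvd' h'.le).mp h.symm
    have := Nat.le_of_dvd (by omega) hd
    omega

lemma A_mem {t : ℕ} (ht1 : 1 ≤ t) (htk : t < k) (u : ℕ → ℕ)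
    (hlow : ∀ i < t, 1 ≤ u i ∧ u i ≤ m i)
    (hne : ∃ i < t, u i ≠ m i)
    (hup : ∀ i, t < i → i < k → 1 ≤ u i ∧ u i ≤ m i)
    (w : ℕ) (hw : w ≤ m t) :
    eChunk n k m u (t+1) k * ⁅ee n k m ⟨t, htk⟩ ^ w, eChunk n k m u 0 t⁆ *
      (eChunk n k m u (t+1) k)⁻¹ ∈ Subgroup.closure (S1set n k m ∪ S2set n k m) := by
  have hone : ∀ hc : ee n k m ⟨t, htk⟩ ^ w = 1,
      eChunk n k m u (t+1) k * ⁅ee n k m ⟨t, htk⟩ ^ w, eChunk n k m u 0 t⁆ *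
      (eChunk n k m u (t+1) k)⁻¹ = 1 := by
    intro hc
    rw [hc, commutatorElement_def, inv_one, one_mul]
    simp
  rcases Nat.eq_zero_or_pos w with rfl | hw1
  · rw [hone (pow_zero _)]; exact one_mem _
  rcases eq_or_lt_of_le hw with rfl | hw2
  · rw [hone (ee_pow ⟨t, htk⟩)]; exact one_mem _
  · apply Subgroup.subset_closure
    left
    have e1 : eChunk n k m (Function.update u t w) (t+1) k = eChunk n k m u (t+1) k :=
      eChunk_congr _ _ (fun i h1 h2 => Function.update_of_ne (by omega) _ _)
    have e2 : eChunk n k m (Function.update u t w) 0 t = eChunk n k m u 0 t :=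
      eChunk_congr _ _ (fun i h1 h2 => Function.update_of_ne (by omega) _ _)
    have e3 : eChunk n k m (Function.update u t w) t (t+1) = ee n k m ⟨t, htk⟩ ^ w := by
      rw [eChunk_single _ htk, Function.update_self]
    refine ⟨t+1, Function.update u t w, by omega, by omega, ?_, ?_, ?_, ?_, ?_⟩
    · intro i hi
      rw [Function.update_of_ne (by omega)]
      exact hlow i (by omega)
    · obtain ⟨i0, hi0, hi0'⟩ := hne
      exact ⟨i0, by omega, by rw [Function.update_of_ne (by omega)]; exact hi0'⟩
    · rw [show t + 1 - 1 = t from rfl, Function.update_self]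
      exact ⟨hw1, by omega⟩
    · intro i h1 h2
      rw [Function.update_of_ne (by omega)]
      exact hup i (by omega) h2
    · rw [show t + 1 - 1 = t from rfl, e1, e2, e3]

lemma step_e (hm : ∀ i < k, 2 ≤ m i) (u : ℕ → ℕ) (hu : ∀ i < k, 1 ≤ u i ∧ u i ≤ m i)
    {t : ℕ} (htk : t < k) :
    eChunk n k m u 0 k * ee n k m ⟨t, htk⟩ *
      (eChunk n k m (Function.update u t (if u t = m t then 1 else u t + 1)) 0 k)⁻¹
      ∈ Subgroup.closure (S1set n k m ∪ S2set n k m) := by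
  set a := ee n k m ⟨t, htk⟩ with ha
  set v' := if u t = m t then 1 else u t + 1 with hv'
  have hbound' : 1 ≤ v' ∧ v' ≤ m t := by
    have h1 := hm t htk
    have h2 := hu t htk
    constructor <;> (rw [hv']; split_ifs <;> omega)
  have hpowm : a ^ m t = 1 := ee_pow ⟨t, htk⟩
  have h2 : a ^ u t * a = a ^ v' := by
    rcases eq_or_ne (u t) (m t) with he | he
    · rw [hv', if_pos he, he, hpowm, one_mul, pow_one]
    · rw [hv', if_neg he, pow_succ]
  have haa : (a ^ u t)⁻¹ * a ^ v' = a := by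
    rw [← h2, inv_mul_cancel_left]
  have hrep : eChunk n k m u 0 k =
      eChunk n k m u (t+1) k * a ^ u t * eChunk n k m u 0 t := by
    rw [ha, mul_assoc, ← eChunk_single u htk, eChunk_split u (Nat.zero_le t) (Nat.le_succ t),
        eChunk_split u (Nat.zero_le _) htk]
  have hrep' : eChunk n k m (Function.update u t v') 0 k =
      eChunk n k m u (t+1) k * a ^ v' * eChunk n k m u 0 t := by
    have e1 : eChunk n k m (Function.update u t v') (t+1) k = eChunk n k m u (t+1) k :=
      eChunk_congr _ _ (fun i h1 h2 => Function.update_of_ne (by omega) _ _)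
    have e2 : eChunk n k m (Function.update u t v') 0 t = eChunk n k m u 0 t :=
      eChunk_congr _ _ (fun i h1 h2 => Function.update_of_ne (by omega) _ _)
    have e3 : eChunk n k m (Function.update u t v') t (t+1) = a ^ v' := by
      rw [eChunk_single _ htk, Function.update_self, ha]
    rw [mul_assoc, ← e1, ← e2, ← e3,
        eChunk_split _ (Nat.zero_le t) (Nat.le_succ t), eChunk_split _ (Nat.zero_le _) htk]
  rw [hrep, hrep']
  set g := eChunk n k m u (t+1) k with hg
  set c := eChunk n k m u 0 t with hc0
  by_cases hcc : ∀ i, i < t → u i = m i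
  · have hc1 : c = 1 := by rw [hc0]; exact eChunk_eq_one u 0 t (fun i _ h2 => hcc i h2)
    rw [hc1, mul_one, mul_one, show g * a ^ u t * a = g * a ^ v' from by rw [mul_assoc, h2],
      mul_inv_cancel]
    exact one_mem _
  · push_neg at hcc
    obtain ⟨i0, hi0t, hi0⟩ := hcc
    have ht1 : 1 ≤ t := by omega
    have hA : ∀ w, w ≤ m t → g * ⁅a ^ w, c⁆ * g⁻¹ ∈
        Subgroup.closure (S1set n k m ∪ S2set n k m) := fun w hw =>
      A_mem ht1 htk u (fun i hi => hu i (by omega)) ⟨i0, hi0t, hi0⟩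
        (fun i h1 h2 => hu i h2) w hw
    have hkey : ∀ x y : GG n k m, g * x * c * (x⁻¹ * y) * (g * y * c)⁻¹ =
        (g * ⁅x, c⁆ * g⁻¹) * (g * ⁅y, c⁆ * g⁻¹)⁻¹ := by
      intro x y
      rw [commutatorElement_def, commutatorElement_def]
      group
    have hid := hkey (a ^ u t) (a ^ v')
    rw [haa] at hid
    rw [hid]
    exact mul_mem (hA (u t) (hu t htk).2) (inv_mem (hA v' hbound'.2))

lemma exists_rep (hm : ∀ i < k, 2 ≤ m i) (g : GG n k m) :
    ∃ u : ℕ → ℕ, (∀ i < k, 1 ≤ u i ∧ u i ≤ m i) ∧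
      g * (eChunk n k m u 0 k)⁻¹ ∈ Subgroup.closure (S1set n k m ∪ S2set n k m) := by
  have hg : g ∈ Subgroup.closure (Set.range (PresentedGroup.of : _ → GG n k m)) := by
    rw [PresentedGroup.closure_range_of]; trivial
  induction hg using Subgroup.closure_induction_right with
  | one =>
    refine ⟨fun i => m i, fun i hi => ⟨?_, le_rfl⟩, ?_⟩
    · exact le_trans one_le_two (hm i hi)
    rw [eChunk_eq_one (fun i => m i) 0 k (fun i _ _ => rfl), inv_one, one_mul]
    exact one_mem _
  | mul_right x hx y hy ih =>
    obtain ⟨u, hu, hF⟩ := ih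
    obtain ⟨s, rfl⟩ := hy
    cases s with
    | inl i =>
      refine ⟨Function.update u i.val (if u i.val = m i.val then 1 else u i.val + 1),
        ?_, ?_⟩
      · intro j hj
        by_cases hne : j = i.val
        · rw [hne]
          simp only [Function.update_self]
          have h1 := hm i.val i.isLt
          have h2 := hu i.val i.isLt
          split_ifs <;> omega
        · rw [Function.update_of_ne hne]
          exact hu j hj
      · have hs := step_e (n := n) hm u hu i.isLt
        have hre : x * PresentedGroup.of (Sum.inl i) *
            (eChunk n k m (Function.update u i.val
              (if u i.val = m i.val then 1 else u i.val + 1)) 0 k)⁻¹ =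
            (x * (eChunk n k m u 0 k)⁻¹) *
            (eChunk n k m u 0 k * ee n k m ⟨i.val, i.isLt⟩ *
              (eChunk n k m (Function.update u i.val
                (if u i.val = m i.val then 1 else u i.val + 1)) 0 k)⁻¹) := by
          show x * ee n k m ⟨i.val, i.isLt⟩ * _ = _
          group
        rw [hre]
        exact mul_mem hF hs
    | inr j =>
      refine ⟨u, hu, ?_⟩
      have hre : x * PresentedGroup.of (Sum.inr j) * (eChunk n k m u 0 k)⁻¹ =
          (x * (eChunk n k m u 0 k)⁻¹) *
          (eChunk n k m u 0 k * hh n k m j * (eChunk n k m u 0 k)⁻¹) := by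
        show x * hh n k m j * _ = _
        group
      rw [hre]
      exact mul_mem hF (Subgroup.subset_closure (Or.inr ⟨j, u, hu, rfl⟩))
  | mul_inv_cancel x hx y hy ih =>
    obtain ⟨u, hu, hF⟩ := ih
    obtain ⟨s, rfl⟩ := hy
    cases s with
    | inl i =>
      set w := if u i.val = 1 then m i.val else u i.val - 1 with hw
      have hu'' : ∀ j < k, 1 ≤ Function.update u i.val w j ∧
          Function.update u i.val w j ≤ m j := by
        intro j hj
        by_cases hne : j = i.val
        · rw [hne]
          simp only [Function.update_self]
          have h1 := hm i.val i.isLt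
          have h2 := hu i.val i.isLt
          rw [hw]
          split_ifs <;> omega
        · rw [Function.update_of_ne hne]
          exact hu j hj
      have hs := step_e (n := n) hm (Function.update u i.val w) hu'' i.isLt
      have hcong : eChunk n k m (Function.update (Function.update u i.val w) i.val
          (if Function.update u i.val w i.val = m i.val then 1
           else Function.update u i.val w i.val + 1)) 0 k = eChunk n k m u 0 k := by
        apply eChunk_congr
        intro j _ hj
        by_cases hne : j = i.val
        · rw [hne]
          simp only [Function.update_self]
          have h1 := hm i.val i.isLt
          have h2 := hu i.val i.isLt
          rw [hw]
          split_ifs <;> omega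
        · rw [Function.update_of_ne hne, Function.update_of_ne hne]
      rw [hcong] at hs
      refine ⟨Function.update u i.val w, hu'', ?_⟩
      have hre : x * (PresentedGroup.of (Sum.inl i))⁻¹ *
          (eChunk n k m (Function.update u i.val w) 0 k)⁻¹ =
          (x * (eChunk n k m u 0 k)⁻¹) *
          (eChunk n k m (Function.update u i.val w) 0 k * ee n k m ⟨i.val, i.isLt⟩ *
            (eChunk n k m u 0 k)⁻¹)⁻¹ := by
        show x * (ee n k m ⟨i.val, i.isLt⟩)⁻¹ * _ = _
        group
      rw [hre]
      exact mul_mem hF (inv_mem hs)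
    | inr j =>
      refine ⟨u, hu, ?_⟩
      have hre : x * (PresentedGroup.of (Sum.inr j))⁻¹ * (eChunk n k m u 0 k)⁻¹ =
          (x * (eChunk n k m u 0 k)⁻¹) *
          (eChunk n k m u 0 k * hh n k m j * (eChunk n k m u 0 k)⁻¹)⁻¹ := by
        show x * (hh n k m j)⁻¹ * _ = _
        group
      rw [hre]
      exact mul_mem hF (inv_mem (Subgroup.subset_closure (Or.inr ⟨j, u, hu, rfl⟩)))

end
end CH

/-- The elements `e_k^{i_k}⋯e₁^{i₁}`, `(i₁,…,i_k) ∈ [m₁]×⋯×[m_k]`, form a complete set of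
representatives of the right coset space `F\G`, `F = ⟨S₁ ∪ S₂⟩`: the map
`(i₁,…,i_k) ↦ F·e_k^{i_k}⋯e₁^{i₁}` is a bijection onto the right cosets of `F` in `G`. -/
theorem coset_representatives_bijective
    (n k : ℕ) (m : ℕ → ℕ) (hk : 1 ≤ k) (hm : ∀ i < k, 2 ≤ m i) :
    Function.Bijective
      (fun u : {u : Fin k → ℕ // ∀ i : Fin k, 1 ≤ u i ∧ u i ≤ m i.val} =>
        Quotient.mk
          (QuotientGroup.rightRel (Subgroup.closure (S1set n k m ∪ S2set n k m)))
          (eChunk n k m (fun i => if h : i < k then u.1 ⟨i, h⟩ else 0) 0 k)) := by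
  constructor
  · intro u v huv
    simp only at huv
    have h1 : eChunk n k m (fun i => if h : i < k then v.1 ⟨i, h⟩ else 0) 0 k *
        (eChunk n k m (fun i => if h : i < k then u.1 ⟨i, h⟩ else 0) 0 k)⁻¹ ∈
        Subgroup.closure (S1set n k m ∪ S2set n k m) :=
      QuotientGroup.rightRel_apply.mp (Quotient.exact huv)
    have h2 := CH.F_le_ker (n := n) h1
    rw [MonoidHom.mem_ker, map_mul, map_inv, mul_inv_eq_one] at h2
    apply Subtype.ext
    funext i
    have h3 := congrFun h2 i
    simp only [CH.phi_rep] at h3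
    have e_v : (if h : i.val < k then v.1 ⟨i.val, h⟩ else 0) = v.1 i := dif_pos i.isLt
    have e_u : (if h : i.val < k then u.1 ⟨i.val, h⟩ else 0) = u.1 i := dif_pos i.isLt
    rw [e_v, e_u] at h3
    have h4 := Multiplicative.ofAdd.injective h3
    rw [ZMod.natCast_eq_natCast_iff] at h4
    exact (CH.nat_eq_of_modEq h4 (v.2 i).1 (v.2 i).2 (u.2 i).1 (u.2 i).2).symm
  · intro q
    induction q using Quotient.inductionOn with
    | h g =>
      obtain ⟨u, hu, hF⟩ := CH.exists_rep (n := n) hm g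
      refine ⟨⟨fun i => u i.val, fun i => hu i.val i.isLt⟩, ?_⟩
      show Quotient.mk _ (eChunk n k m (fun j => if h : j < k then u j else 0) 0 k) = _
      have he : eChunk n k m (fun j => if h : j < k then u j else 0) 0 k =
          eChunk n k m u 0 k := CH.eChunk_congr _ _ (fun i _ h2 => dif_pos h2)
      rw [he]
      exact Quotient.sound (QuotientGroup.rightRel_apply.mpr hF)
end

section
/- Assume (n,k,m₁,…,m_k) is neither of the form (0,1,m₁) nor equal to (0,2,2,2). Then the subgroup F = ⟨S₁ ∪ S₂⟩ of G is a free group (freely generated by the elements of S₁ ∪ S₂) and its index in G satisfies [G : F] = m₁·m₂⋯m_k. -/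
open scoped commutatorElement

namespace Cor314
variable (n k : ℕ) (m : ℕ → ℕ)

lemma eChunk_succ (u : ℕ → ℕ) (s t : ℕ) : eChunk n k m u s (t+1) =
    if s ≤ t then (if h : t < k then ee n k m ⟨t, h⟩ ^ u t else 1) * eChunk n k m u s t
      else 1 := rfl

lemma eChunk_self (u : ℕ → ℕ) (s : ℕ) : eChunk n k m u s s = 1 := by
  cases s with
  | zero => rfl
  | succ t => rw [eChunk_succ, if_neg (by omega)]

lemma eChunk_congr {u u' : ℕ → ℕ} {s t : ℕ}
    (h : ∀ i (hik : i < k), s ≤ i → i < t →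
      ee n k m ⟨i, hik⟩ ^ u i = ee n k m ⟨i, hik⟩ ^ u' i) :
    eChunk n k m u s t = eChunk n k m u' s t := by
  induction t with
  | zero => rfl
  | succ t ih =>
    rw [eChunk_succ, eChunk_succ]
    by_cases hst : s ≤ t
    · rw [if_pos hst, if_pos hst, ih (fun i hik h1 h2 => h i hik h1 (by omega))]
      by_cases hk : t < k
      · rw [dif_pos hk, dif_pos hk, h t hk hst (by omega)]
      · rw [dif_neg hk, dif_neg hk]
    · rw [if_neg hst, if_neg hst]

lemma eChunk_eq_one {u : ℕ → ℕ} {s t : ℕ}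
    (h : ∀ i (hik : i < k), s ≤ i → i < t → ee n k m ⟨i, hik⟩ ^ u i = 1) :
    eChunk n k m u s t = 1 := by
  induction t with
  | zero => rfl
  | succ t ih =>
    rw [eChunk_succ]
    by_cases hst : s ≤ t
    · rw [if_pos hst, ih (fun i hik h1 h2 => h i hik h1 (by omega)), mul_one]
      by_cases hk : t < k
      · rw [dif_pos hk, h t hk hst (by omega)]
      · rw [dif_neg hk]
    · rw [if_neg hst]

lemma eChunk_split {s r t : ℕ} (hsr : s ≤ r) (hrt : r ≤ t) (u : ℕ → ℕ) :
    eChunk n k m u s t = eChunk n k m u r t * eChunk n k m u s r := by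
  induction t with
  | zero => rw [Nat.le_zero.mp hrt] at hsr ⊢; rw [Nat.le_zero.mp hsr]; simp [eChunk_self]
  | succ t ih =>
    by_cases hrt' : r ≤ t
    · rw [eChunk_succ, eChunk_succ, if_pos (by omega), if_pos hrt', ih hrt', mul_assoc]
    · have : r = t + 1 := by omega
      subst this
      rw [eChunk_self, one_mul]

lemma eChunk_single (u : ℕ → ℕ) (j : ℕ) (hj : j < k) :
    eChunk n k m u j (j+1) = ee n k m ⟨j, hj⟩ ^ u j := by
  rw [eChunk_succ, if_pos le_rfl, dif_pos hj, eChunk_self, mul_one]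

lemma ee_pow_m (j : Fin k) : ee n k m j ^ m j.val = 1 := by
  have : (ee n k m j) ^ m j.val =
      PresentedGroup.mk (Grels n k m) (FreeGroup.of (Sum.inl j) ^ m j.val) := by
    rw [map_pow]; rfl
  rw [this]
  have hmem : FreeGroup.of (Sum.inl j) ^ m j.val ∈
      Subgroup.normalClosure (Grels n k m) :=
    Subgroup.subset_normalClosure ⟨j, rfl⟩
  exact (QuotientGroup.eq_one_iff _).mpr hmem

lemma ee_pow_mod (j : Fin k) (w : ℕ) :
    ee n k m j ^ w = ee n k m j ^ (w % m j.val) :=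
  pow_eq_pow_mod _ (ee_pow_m n k m j)


/-- the coset space: `∏ ZMod (m i)` -/
abbrev AV : Type := ∀ i : Fin k, ZMod (m i.val)

abbrev Hm : Prop := ∀ i < k, 2 ≤ m i

def dl (j : Fin k) : AV k m := Pi.single j 1

abbrev B : Type := ↥(S1set n k m ∪ S2set n k m)

/-- canonical exponents (in `[0, m i - 1]`) of a coset -/
def vFun (a : AV k m) : ℕ → ℕ := fun i => if h : i < k then (a ⟨i, h⟩).val else 0

/-- exponents in `[1, m i]` of a coset -/
def uFun (a : AV k m) : ℕ → ℕ :=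
  fun i => if h : i < k then (if a ⟨i, h⟩ = 0 then m i else (a ⟨i, h⟩).val) else 0

/-- the Schreier transversal -/
def sig (a : AV k m) : GG n k m := eChunk n k m (vFun k m a) 0 k

lemma ee_pow_uFun_eq_vFun (hm : Hm k m) (a : AV k m) (i : ℕ) (hik : i < k) :
    ee n k m ⟨i, hik⟩ ^ uFun k m a i = ee n k m ⟨i, hik⟩ ^ vFun k m a i := by
  unfold uFun vFun
  rw [dif_pos hik, dif_pos hik]
  haveI : NeZero (m i) := ⟨by have := hm i hik; omega⟩
  by_cases h0 : a ⟨i, hik⟩ = 0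
  · rw [if_pos h0, h0, ee_pow_m, ZMod.val_zero, pow_zero]
  · rw [if_neg h0]

lemma eChunk_uFun_eq_sig (hm : Hm k m) (a : AV k m) :
    eChunk n k m (uFun k m a) 0 k = sig n k m a :=
  eChunk_congr n k m (fun i hik _ _ => ee_pow_uFun_eq_vFun n k m hm a i hik)

lemma sig_zero : sig n k m 0 = 1 := by
  apply eChunk_eq_one
  intro i hik _ _
  have : vFun k m (0 : AV k m) i = 0 := by simp [vFun]
  rw [this, pow_zero]

open scoped Classical in
/-- the condition for an `S1`-type edge label to be nontrivial -/
def S1cond (a : AV k m) (j : Fin k) (w : ℕ) : Prop :=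
  (∃ i : Fin k, i.val < j.val ∧ a i ≠ 0) ∧ 1 ≤ w ∧ w ≤ m j.val - 1

def S1eltG (a : AV k m) (j : Fin k) (w : ℕ) : GG n k m :=
  eChunk n k m (Function.update (uFun k m a) j.val w) (j.val + 1) k *
    ⁅eChunk n k m (Function.update (uFun k m a) j.val w) j.val (j.val + 1),
      eChunk n k m (Function.update (uFun k m a) j.val w) 0 j.val⁆ *
    (eChunk n k m (Function.update (uFun k m a) j.val w) (j.val + 1) k)⁻¹

lemma uFun_mem (hm : Hm k m) (a : AV k m) (i : ℕ) (hik : i < k) :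
    1 ≤ uFun k m a i ∧ uFun k m a i ≤ m i := by
  haveI : NeZero (m i) := ⟨by have := hm i hik; omega⟩
  unfold uFun
  rw [dif_pos hik]
  by_cases h0 : a ⟨i, hik⟩ = 0
  · rw [if_pos h0]; exact ⟨by have := hm i hik; omega, le_rfl⟩
  · rw [if_neg h0]
    have h1 : (a ⟨i, hik⟩).val < m i := ZMod.val_lt _
    have h2 : (a ⟨i, hik⟩).val ≠ 0 := by
      intro h
      exact h0 (by rwa [← ZMod.val_eq_zero])
    omega

lemma S1eltG_mem (hm : Hm k m) (a : AV k m) (j : Fin k) (w : ℕ)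
    (h : S1cond k m a j w) : S1eltG n k m a j w ∈ S1set n k m := by
  obtain ⟨⟨i0, hi0, hi0ne⟩, hw1, hw2⟩ := h
  refine ⟨j.val + 1, Function.update (uFun k m a) j.val w, by omega, by omega, ?_, ?_, ?_, ?_, ?_⟩
  · intro i hi
    simp only [Nat.add_sub_cancel] at hi
    rw [Function.update_of_ne (by omega)]
    exact uFun_mem k m hm a i (by omega)
  · refine ⟨i0.val, by simpa using hi0, ?_⟩
    rw [Function.update_of_ne (by omega)]
    haveI : NeZero (m i0.val) := ⟨by have := hm i0.val i0.isLt; omega⟩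
    unfold uFun
    rw [dif_pos i0.isLt]
    have : (⟨i0.val, i0.isLt⟩ : Fin k) = i0 := rfl
    rw [this, if_neg hi0ne]
    have := ZMod.val_lt (a i0)
    omega
  · rw [show (j.val + 1 - 1 : ℕ) = j.val from rfl, Function.update_self]
    exact ⟨hw1, hw2⟩
  · intro i hi1 hi2
    rw [Function.update_of_ne (by omega)]
    exact uFun_mem k m hm a i hi2
  · rfl

def S2eltG (l : Fin (2 * n)) (a : AV k m) : GG n k m :=
  eChunk n k m (uFun k m a) 0 k * hh n k m l * (eChunk n k m (uFun k m a) 0 k)⁻¹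

lemma S2eltG_mem (hm : Hm k m) (l : Fin (2 * n)) (a : AV k m) :
    S2eltG n k m l a ∈ S2set n k m :=
  ⟨l, uFun k m a, fun i hi => uFun_mem k m hm a i hi, rfl⟩

open scoped Classical in
noncomputable def bB (hm : Hm k m) (j : Fin k) (a : AV k m) (w : ℕ) : FreeGroup (B n k m) :=
  if h : S1cond k m a j w then
    FreeGroup.of ⟨S1eltG n k m a j w, Or.inl (S1eltG_mem n k m hm a j w h)⟩
  else 1

noncomputable def LEB (hm : Hm k m) (j : Fin k) (a : AV k m) : FreeGroup (B n k m) :=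
  bB n k m hm j a ((a j).val) * (bB n k m hm j a ((a j).val + 1))⁻¹

noncomputable def LHB (hm : Hm k m) (l : Fin (2 * n)) (a : AV k m) : FreeGroup (B n k m) :=
  FreeGroup.of ⟨S2eltG n k m l a, Or.inr (S2eltG_mem n k m hm l a)⟩

/-! ### The semidirect product target -/

def actHom : Multiplicative (AV k m) →* MulAut ((AV k m) → FreeGroup (B n k m)) where
  toFun g :=
    { toFun := fun f a => f (a + g.toAdd)
      invFun := fun f a => f (a - g.toAdd)
      left_inv := fun f => funext fun a => by simp
      right_inv := fun f => funext fun a => by simp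
      map_mul' := fun f f' => rfl }
  map_one' := by
    ext f a
    simp
  map_mul' := fun g g' => by
    ext f a
    show f (a + (g.toAdd + g'.toAdd)) = f (a + g.toAdd + g'.toAdd)
    rw [add_assoc]

abbrev WW : Type := ((AV k m) → FreeGroup (B n k m)) ⋊[actHom n k m] Multiplicative (AV k m)

lemma actHom_apply (g : Multiplicative (AV k m)) (f : (AV k m) → FreeGroup (B n k m))
    (a : AV k m) : (actHom n k m g) f a = f (a + g.toAdd) := rfl

lemma sd_pow_right (x : WW n k m) (r : ℕ) : (x ^ r).right = x.right ^ r := by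
  induction r with
  | zero => simp [pow_zero]
  | succ r ih => rw [pow_succ, pow_succ, ← ih]; rfl

lemma sd_pow_left (x : WW n k m) (r : ℕ) (a : AV k m) :
    (x ^ r).left a = ((List.range r).map fun i => x.left (a + i • x.right.toAdd)).prod := by
  induction r generalizing a with
  | zero =>
    show (1 : WW n k m).left a = _
    rw [SemidirectProduct.one_left]
    simp
  | succ r ih =>
    rw [pow_succ, SemidirectProduct.mul_left, List.range_succ, List.map_append,
      List.prod_append]
    show (x ^ r).left a * (actHom n k m (x ^ r).right) x.left a = _
    rw [actHom_apply, ih, sd_pow_right, toAdd_pow]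
    simp

lemma list_telescope {G : Type} [Group G] (c : ℕ → G) (r : ℕ) :
    ((List.range r).map fun i => c i * (c (i+1))⁻¹).prod = c 0 * (c r)⁻¹ := by
  induction r with
  | zero => simp
  | succ r ih =>
    rw [List.range_succ, List.map_append, List.prod_append, ih]
    simp [mul_assoc]

/-! ### Properties of the labels -/

lemma smul_dl (j : Fin k) (i : ℕ) :
    i • dl k m j = Pi.single j ((i : ZMod (m j.val))) := by
  funext i'
  rcases eq_or_ne i' j with rfl | hne
  · simp only [Pi.smul_apply, dl, Pi.single_eq_same]
    rw [nsmul_eq_mul, mul_one]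
  · simp only [Pi.smul_apply, dl, Pi.single_eq_of_ne hne, smul_zero]

lemma bB_shift (hm : Hm k m) (j : Fin k) (a : AV k m) (x : ZMod (m j.val)) (w : ℕ) :
    bB n k m hm j (a + Pi.single j x) w = bB n k m hm j a w := by
  have h1 : ∀ i : Fin k, i ≠ j → (a + Pi.single j x : AV k m) i = a i := by
    intro i hi
    simp [Pi.single_eq_of_ne hi]
  have hcond : S1cond k m (a + Pi.single j x) j w ↔ S1cond k m a j w := by
    unfold S1cond
    constructor
    · rintro ⟨⟨i, hi, hne⟩, hw⟩
      exact ⟨⟨i, hi, by rwa [h1 i (by intro h; subst h; omega)] at hne⟩, hw⟩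
    · rintro ⟨⟨i, hi, hne⟩, hw⟩
      exact ⟨⟨i, hi, by rwa [h1 i (by intro h; subst h; omega)]⟩, hw⟩
  have helt : S1eltG n k m (a + Pi.single j x) j w = S1eltG n k m a j w := by
    unfold S1eltG
    have : Function.update (uFun k m (a + Pi.single j x)) j.val w
        = Function.update (uFun k m a) j.val w := by
      funext i
      rcases eq_or_ne i j.val with rfl | hne
      · rw [Function.update_self, Function.update_self]
      · rw [Function.update_of_ne hne, Function.update_of_ne hne]
        unfold uFun
        by_cases hik : i < k
        · rw [dif_pos hik, dif_pos hik, h1 ⟨i, hik⟩ (by simp [Fin.ext_iff, hne])]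
        · rw [dif_neg hik, dif_neg hik]
    rw [this]
  unfold bB
  by_cases h : S1cond k m a j w
  · rw [dif_pos h, dif_pos (hcond.mpr h)]
    congr 1
    exact Subtype.ext helt
  · rw [dif_neg h, dif_neg (fun hc => h (hcond.mp hc))]

lemma bB_zero (hm : Hm k m) (j : Fin k) (a : AV k m) : bB n k m hm j a 0 = 1 := by
  unfold bB
  rw [dif_neg]
  rintro ⟨-, h, -⟩
  omega

lemma bB_top (hm : Hm k m) (j : Fin k) (a : AV k m) : bB n k m hm j a (m j.val) = 1 := by
  unfold bB
  rw [dif_neg]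
  rintro ⟨-, -, h⟩
  have := hm j.val j.isLt
  omega

lemma bB_succ_mod (hm : Hm k m) (j : Fin k) (a : AV k m) (w : ℕ) (hw : w < m j.val) :
    bB n k m hm j a ((w + 1) % m j.val) = bB n k m hm j a (w + 1) := by
  rcases Nat.lt_or_ge (w + 1) (m j.val) with h | h
  · rw [Nat.mod_eq_of_lt h]
  · have h' : w + 1 = m j.val := by omega
    rw [h', Nat.mod_self, bB_zero, bB_top]

lemma bB_trivial (hm : Hm k m) (j : Fin k) (a : AV k m)
    (h : ∀ i : Fin k, i.val < j.val → a i = 0) (w : ℕ) : bB n k m hm j a w = 1 := by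
  unfold bB
  rw [dif_neg]
  rintro ⟨⟨i, hi, hne⟩, -⟩
  exact hne (h i hi)

lemma LEB_apply (hm : Hm k m) (j : Fin k) (a : AV k m) :
    LEB n k m hm j a = bB n k m hm j a ((a j).val) * (bB n k m hm j a ((a j).val + 1))⁻¹ := rfl

lemma tel (hm : Hm k m) (j : Fin k) (a : AV k m) (r : ℕ) :
    ((List.range r).map fun i => LEB n k m hm j (a + i • dl k m j)).prod
      = bB n k m hm j a ((a j).val) *
        (bB n k m hm j a ((a j + (r : ZMod (m j.val))).val))⁻¹ := by
  haveI : NeZero (m j.val) := ⟨by have := hm j.val j.isLt; omega⟩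
  haveI : Fact (1 < m j.val) := ⟨hm j.val j.isLt⟩
  have key : ∀ i : ℕ, LEB n k m hm j (a + i • dl k m j)
      = bB n k m hm j a ((a j + (i : ZMod (m j.val))).val) *
        (bB n k m hm j a ((a j + ((i + 1 : ℕ) : ZMod (m j.val))).val))⁻¹ := by
    intro i
    rw [LEB_apply, smul_dl, bB_shift, bB_shift]
    have hval : (a + Pi.single j ((i : ZMod (m j.val))) : AV k m) j
        = a j + (i : ZMod (m j.val)) := by simp
    rw [hval]
    congr 2
    have h1 : ((i + 1 : ℕ) : ZMod (m j.val)) = (i : ZMod (m j.val)) + 1 := by push_cast; ring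
    have h2 : ((a j + ((i + 1 : ℕ) : ZMod (m j.val))).val)
        = ((a j + (i : ZMod (m j.val))).val + 1) % m j.val := by
      rw [h1, ← add_assoc, ZMod.val_add (a j + (i : ZMod (m j.val))) 1, ZMod.val_one]
    rw [h2]
    exact (bB_succ_mod n k m hm j a _ (ZMod.val_lt _)).symm
  have h2 : ((List.range r).map fun i => LEB n k m hm j (a + i • dl k m j)).prod
      = ((List.range r).map fun i =>
          (fun i' : ℕ => bB n k m hm j a ((a j + ((i' : ℕ) : ZMod (m j.val))).val)) i *
          ((fun i' : ℕ => bB n k m hm j a ((a j + ((i' : ℕ) : ZMod (m j.val))).val)) (i+1))⁻¹).prod := by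
    congr 1
    exact List.map_congr_left (fun i _ => key i)
  rw [h2, list_telescope]
  simp

/-! ### The homomorphism `Ψ` -/

noncomputable def PsiF (hm : Hm k m) : (Fin k ⊕ Fin (2 * n)) → WW n k m :=
  Sum.elim (fun j => ⟨LEB n k m hm j, Multiplicative.ofAdd (dl k m j)⟩)
           (fun l => ⟨LHB n k m hm l, 1⟩)

lemma relcheck (hm : Hm k m) : ∀ r ∈ Grels n k m, FreeGroup.lift (PsiF n k m hm) r = 1 := by
  rintro r ⟨i, rfl⟩
  rw [map_pow, FreeGroup.lift_apply_of]
  apply SemidirectProduct.ext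
  · funext a
    rw [sd_pow_left]
    show ((List.range (m i.val)).map fun r => LEB n k m hm i (a + r • dl k m i)).prod = _
    rw [tel]
    rw [ZMod.natCast_self, add_zero, mul_inv_cancel]
    rw [SemidirectProduct.one_left]
    rfl
  · rw [sd_pow_right]
    show (Multiplicative.ofAdd (dl k m i)) ^ (m i.val) = (1 : WW n k m).right
    rw [← ofAdd_nsmul, smul_dl, ZMod.natCast_self, Pi.single_zero]
    rfl

noncomputable def Psi (hm : Hm k m) : GG n k m →* WW n k m :=
  PresentedGroup.toGroup (relcheck n k m hm)

noncomputable def phi (hm : Hm k m) : GG n k m →* Multiplicative (AV k m) :=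
  (SemidirectProduct.rightHom).comp (Psi n k m hm)

lemma Psi_ee (hm : Hm k m) (j : Fin k) :
    Psi n k m hm (ee n k m j) = ⟨LEB n k m hm j, Multiplicative.ofAdd (dl k m j)⟩ :=
  PresentedGroup.toGroup.of (relcheck n k m hm)

lemma Psi_hh (hm : Hm k m) (l : Fin (2 * n)) :
    Psi n k m hm (hh n k m l) = ⟨LHB n k m hm l, 1⟩ :=
  PresentedGroup.toGroup.of (relcheck n k m hm)

lemma Psi_right (hm : Hm k m) (x : GG n k m) :
    (Psi n k m hm x).right = phi n k m hm x := rfl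

lemma phi_ee (hm : Hm k m) (j : Fin k) :
    phi n k m hm (ee n k m j) = Multiplicative.ofAdd (dl k m j) := by
  rw [← Psi_right, Psi_ee]

lemma phi_hh (hm : Hm k m) (l : Fin (2 * n)) : phi n k m hm (hh n k m l) = 1 := by
  rw [← Psi_right, Psi_hh]


/-! ### The map `ρ` from the free group on `S₁ ∪ S₂` -/

noncomputable def rho : FreeGroup (B n k m) →* GG n k m := FreeGroup.lift Subtype.val

lemma rho_of (b : B n k m) : rho n k m (FreeGroup.of b) = b.val := FreeGroup.lift_apply_of

lemma phi_S (hm : Hm k m) (s : GG n k m) (hs : s ∈ S1set n k m ∪ S2set n k m) :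
    phi n k m hm s = 1 := by
  rcases hs with hs | hs
  · obtain ⟨t, u, -, -, -, -, -, -, hx⟩ := hs
    subst hx
    rw [map_mul, map_mul, map_inv, map_commutatorElement,
      commutatorElement_eq_one_iff_commute.mpr (Commute.all _ _), mul_one, mul_inv_cancel]
  · obtain ⟨l, u, -, hx⟩ := hs
    subst hx
    rw [map_mul, map_mul, map_inv, phi_hh, mul_one, mul_inv_cancel]

lemma phi_rho (hm : Hm k m) (w : FreeGroup (B n k m)) :
    phi n k m hm (rho n k m w) = 1 := by
  refine FreeGroup.induction_on (C := fun w => phi n k m hm (rho n k m w) = 1) w ?_ ?_ ?_ ?_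
  · simp
  · intro b
    show phi n k m hm (rho n k m (FreeGroup.of b)) = 1
    rw [rho_of]
    exact phi_S n k m hm b.val b.2
  · intro b hb
    rw [map_inv, map_inv, hb, inv_one]
  · intro x y hx hy
    rw [map_mul, map_mul, hx, hy, mul_one]

/-! ### Computation of `φ` on transversal elements -/

def asum (u : ℕ → ℕ) (s : ℕ) : ℕ → AV k m
  | 0 => 0
  | t + 1 =>
      if s ≤ t then (if h : t < k then u t • dl k m ⟨t, h⟩ else 0) + asum u s t else 0

lemma asum_succ (u : ℕ → ℕ) (s t : ℕ) : asum k m u s (t+1) =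
    if s ≤ t then (if h : t < k then u t • dl k m ⟨t, h⟩ else 0) + asum k m u s t else 0 := rfl

lemma phi_eChunk (hm : Hm k m) (u : ℕ → ℕ) (s t : ℕ) :
    phi n k m hm (eChunk n k m u s t) = Multiplicative.ofAdd (asum k m u s t) := by
  induction t with
  | zero =>
    show phi n k m hm 1 = _
    rw [map_one]
    rfl
  | succ t ih =>
    rw [eChunk_succ, asum_succ]
    by_cases hst : s ≤ t
    · rw [if_pos hst, if_pos hst, map_mul, ih]
      by_cases hk : t < k
      · rw [dif_pos hk, dif_pos hk, map_pow, phi_ee, ← ofAdd_nsmul]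
        rfl
      · rw [dif_neg hk, dif_neg hk, map_one, zero_add, one_mul]
    · rw [if_neg hst, if_neg hst, map_one]
      rfl

lemma asum_coord (u : ℕ → ℕ) (s t : ℕ) (ht : t ≤ k) (i : Fin k) :
    asum k m u s t i = if s ≤ i.val ∧ i.val < t then ((u i.val : ZMod (m i.val))) else 0 := by
  induction t with
  | zero => rw [if_neg (by omega)]; rfl
  | succ t ih =>
    rw [asum_succ]
    by_cases hst : s ≤ t
    · have hk : t < k := by omega
      rw [if_pos hst, dif_pos hk, Pi.add_apply, smul_dl, ih (by omega)]
      rcases eq_or_ne i (⟨t, hk⟩ : Fin k) with rfl | hne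
      · rw [Pi.single_eq_same, if_neg (by simp), if_pos (by simp [hst]), add_zero]
      · have hit : i.val ≠ t := fun h => hne (Fin.ext h)
        rw [Pi.single_eq_of_ne hne, zero_add]
        by_cases hc : s ≤ i.val ∧ i.val < t
        · rw [if_pos hc, if_pos ⟨hc.1, by omega⟩]
        · rw [if_neg hc, if_neg (by omega)]
    · rw [if_neg hst, if_neg (by omega)]
      rfl

lemma phi_sig (hm : Hm k m) (a : AV k m) :
    phi n k m hm (sig n k m a) = Multiplicative.ofAdd a := by
  rw [sig, phi_eChunk]
  congr 1
  funext i
  rw [asum_coord k m _ _ _ le_rfl, if_pos ⟨Nat.zero_le _, i.isLt⟩]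
  haveI : NeZero (m i.val) := ⟨by have := hm i.val i.isLt; omega⟩
  unfold vFun
  rw [dif_pos i.isLt]
  have : (⟨i.val, i.isLt⟩ : Fin k) = i := rfl
  rw [this]
  exact ZMod.natCast_rightInverse (a i)

/-! ### The key rewriting identity -/

lemma sig_mul_ee (hm : Hm k m) (a : AV k m) (j : Fin k) :
    sig n k m a * ee n k m j =
      rho n k m (LEB n k m hm j a) * sig n k m (a + dl k m j) := by
  haveI : NeZero (m j.val) := ⟨by have := hm j.val j.isLt; omega⟩
  haveI : Fact (1 < m j.val) := ⟨hm j.val j.isLt⟩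
  set v := (a j).val with hv
  set D := eChunk n k m (vFun k m a) (j.val + 1) k with hD
  set C := eChunk n k m (vFun k m a) 0 j.val with hC
  have hvj : vFun k m a j.val = v := by
    unfold vFun; rw [dif_pos j.isLt]
  have hsplit : sig n k m a = D * (ee n k m j ^ v * C) := by
    rw [sig, eChunk_split n k m (Nat.zero_le _) (by omega : j.val + 1 ≤ k),
      eChunk_split n k m (Nat.zero_le _) (by omega : j.val ≤ j.val + 1),
      eChunk_single n k m _ j.val j.isLt, hvj]
  have hshift : ∀ i : Fin k, i ≠ j → (a + dl k m j : AV k m) i = a i := by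
    intro i hi
    simp [dl, Pi.single_eq_of_ne hi]
  have hvshift : ∀ i (hik : i < k), i ≠ j.val → vFun k m (a + dl k m j) i = vFun k m a i := by
    intro i hik hne
    unfold vFun
    rw [dif_pos hik, dif_pos hik, hshift ⟨i, hik⟩ (by simp [Fin.ext_iff, hne])]
  set v' := ((a + dl k m j : AV k m) j).val with hv'
  have hsplit' : sig n k m (a + dl k m j) = D * (ee n k m j ^ v' * C) := by
    rw [sig, eChunk_split n k m (Nat.zero_le _) (by omega : j.val + 1 ≤ k),
      eChunk_split n k m (Nat.zero_le _) (by omega : j.val ≤ j.val + 1),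
      eChunk_single n k m _ j.val j.isLt]
    have e1 : eChunk n k m (vFun k m (a + dl k m j)) (j.val + 1) k = D := by
      rw [hD]
      exact eChunk_congr n k m (fun i hik h1 h2 => by rw [hvshift i hik (by omega)])
    have e2 : eChunk n k m (vFun k m (a + dl k m j)) 0 j.val = C := by
      rw [hC]
      exact eChunk_congr n k m (fun i hik h1 h2 => by rw [hvshift i hik (by omega)])
    have e3 : vFun k m (a + dl k m j) j.val = v' := by
      unfold vFun; rw [dif_pos j.isLt]
    rw [e1, e2, e3]
  have hbval : ∀ w, w ≤ m j.val → rho n k m (bB n k m hm j a w) =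
      D * (ee n k m j ^ w * C * (ee n k m j ^ w)⁻¹ * C⁻¹) * D⁻¹ := by
    intro w hw
    unfold bB
    by_cases h : S1cond k m a j w
    · rw [dif_pos h, rho_of]
      show S1eltG n k m a j w = _
      unfold S1eltG
      have e1 : eChunk n k m (Function.update (uFun k m a) j.val w) (j.val + 1) k = D := by
        rw [hD]
        refine eChunk_congr n k m (fun i hik h1 h2 => ?_)
        rw [Function.update_of_ne (by omega)]
        exact ee_pow_uFun_eq_vFun n k m hm a i hik
      have e2 : eChunk n k m (Function.update (uFun k m a) j.val w) 0 j.val = C := by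
        rw [hC]
        refine eChunk_congr n k m (fun i hik h1 h2 => ?_)
        rw [Function.update_of_ne (by omega)]
        exact ee_pow_uFun_eq_vFun n k m hm a i hik
      have e3 : eChunk n k m (Function.update (uFun k m a) j.val w) j.val (j.val + 1)
          = ee n k m j ^ w := by
        rw [eChunk_single n k m _ j.val j.isLt, Function.update_self]
      rw [e1, e2, e3, commutatorElement_def]
    · rw [dif_neg h, map_one]
      by_cases hex : ∃ i : Fin k, i.val < j.val ∧ a i ≠ 0
      · have hw0 : w = 0 ∨ w = m j.val := by
          unfold S1cond at h
          have := hm j.val j.isLt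
          by_contra hcon
          push_neg at hcon
          exact h ⟨hex, by omega, by omega⟩
        rcases hw0 with rfl | rfl
        · rw [pow_zero]
          group
        · rw [ee_pow_m]
          group
      · push_neg at hex
        have hC1 : C = 1 := by
          rw [hC]
          refine eChunk_eq_one n k m (fun i hik h1 h2 => ?_)
          unfold vFun
          rw [dif_pos hik]
          have : a ⟨i, hik⟩ = 0 := hex ⟨i, hik⟩ h2
          rw [this, ZMod.val_zero, pow_zero]
        rw [hC1]
        group
  have hvlt : v < m j.val := ZMod.val_lt _
  have hv'eq : ee n k m j ^ v' = ee n k m j ^ (v + 1) := by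
    have : v' = (v + 1) % m j.val := by
      rw [hv']
      have : (a + dl k m j : AV k m) j = a j + 1 := by simp [dl]
      rw [this, ZMod.val_add, ZMod.val_one]
    rw [this, ← ee_pow_mod]
  rw [hsplit, hsplit', LEB_apply, map_mul, map_inv,
    hbval v (by omega), hbval (v+1) (by omega), hv'eq]
  group

lemma sig_mul_hh (hm : Hm k m) (a : AV k m) (l : Fin (2 * n)) :
    sig n k m a * hh n k m l = rho n k m (LHB n k m hm l a) * sig n k m a := by
  rw [LHB, rho_of]
  show _ = S2eltG n k m l a * sig n k m a
  rw [S2eltG, eChunk_uFun_eq_sig n k m hm]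
  group

/-! ### Generation: every element of `ker φ` lies in the closure -/

lemma reach (hm : Hm k m) (g : GG n k m) (a : AV k m) :
    ∃ w : FreeGroup (B n k m),
      sig n k m a * g = rho n k m w * sig n k m (a + (phi n k m hm g).toAdd) := by
  revert a
  refine QuotientGroup.induction_on g ?_
  intro x
  refine FreeGroup.induction_on
    (C := fun z => ∀ a : AV k m, ∃ w : FreeGroup (B n k m),
      sig n k m a * (PresentedGroup.mk (Grels n k m) z) =
        rho n k m w * sig n k m (a + (phi n k m hm (PresentedGroup.mk (Grels n k m) z)).toAdd))
    x ?_ ?_ ?_ ?_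
  · intro a
    refine ⟨1, ?_⟩
    rw [map_one, map_one, map_one, mul_one, one_mul, toAdd_one, add_zero]
  · rintro (j | l) a
    · refine ⟨LEB n k m hm j a, ?_⟩
      have h1 : (PresentedGroup.mk (Grels n k m) (FreeGroup.of (Sum.inl j))) = ee n k m j := rfl
      rw [h1, phi_ee]
      exact sig_mul_ee n k m hm a j
    · refine ⟨LHB n k m hm l a, ?_⟩
      have h1 : (PresentedGroup.mk (Grels n k m) (FreeGroup.of (Sum.inr l))) = hh n k m l := rfl
      rw [h1, phi_hh]
      have h0 : Multiplicative.toAdd (1 : Multiplicative (AV k m)) = 0 := rfl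
      rw [h0, add_zero]
      exact sig_mul_hh n k m hm a l
  · intro y hy a
    set X : GG n k m := PresentedGroup.mk (Grels n k m) (FreeGroup.of y) with hX
    set t : AV k m := (phi n k m hm X).toAdd with ht
    obtain ⟨w, hw⟩ := hy (a + -t)
    rw [neg_add_cancel_right] at hw
    refine ⟨w⁻¹, ?_⟩
    rw [map_inv, map_inv, map_inv, toAdd_inv]
    have h2 : rho n k m w⁻¹ * (sig n k m (a + -t) * X) = sig n k m a := by
      rw [map_inv, hw]
      group
    rw [← h2]
    group
    rw [map_zpow, ← hX, ← ht]
    group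
  · intro x y hx hy a
    obtain ⟨w1, h1⟩ := hx a
    obtain ⟨w2, h2⟩ := hy (a + (phi n k m hm (PresentedGroup.mk (Grels n k m) x)).toAdd)
    refine ⟨w1 * w2, ?_⟩
    rw [map_mul, ← mul_assoc, h1, mul_assoc, h2, map_mul, map_mul, toAdd_mul, ← add_assoc,
      ← mul_assoc]

lemma closure_eq_ker (hm : Hm k m) :
    Subgroup.closure (S1set n k m ∪ S2set n k m) = (phi n k m hm).ker := by
  apply le_antisymm
  · exact (Subgroup.closure_le _).mpr
      (fun s hs => by simpa [MonoidHom.mem_ker] using phi_S n k m hm s hs)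
  · intro g hg
    rw [MonoidHom.mem_ker] at hg
    obtain ⟨w, hw⟩ := reach n k m hm g 0
    rw [sig_zero, one_mul, hg] at hw
    have h0 : Multiplicative.toAdd (1 : Multiplicative (AV k m)) = 0 := rfl
    rw [h0, add_zero, sig_zero, mul_one] at hw
    have : g ∈ (rho n k m).range := ⟨w, hw.symm⟩
    rwa [rho, FreeGroup.range_lift_eq_closure, Subtype.range_val] at this

lemma index_eq (hm : Hm k m) :
    (Subgroup.closure (S1set n k m ∪ S2set n k m)).index = ∏ i ∈ Finset.range k, m i := by
  rw [closure_eq_ker n k m hm, Subgroup.index_ker]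
  have hsurj : Function.Surjective (phi n k m hm) := by
    intro x
    refine ⟨sig n k m x.toAdd, ?_⟩
    rw [phi_sig]
    rfl
  rw [MonoidHom.range_eq_top.mpr hsurj, Subgroup.card_top]
  have h1 : Nat.card (Multiplicative (AV k m)) = Nat.card (AV k m) :=
    Nat.card_congr Multiplicative.toAdd
  rw [h1, Nat.card_pi]
  have h2 : ∀ i : Fin k, Nat.card (ZMod (m i.val)) = m i.val := fun i => Nat.card_zmod _
  rw [Finset.prod_congr rfl (fun i _ => h2 i)]
  exact Fin.prod_univ_eq_prod_range (fun i => m i) k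


/-! ### Evaluation of `Ψ` on words -/

lemma Psi_mul_left (hm : Hm k m) (x y : GG n k m) (a : AV k m) :
    (Psi n k m hm (x * y)).left a
      = (Psi n k m hm x).left a *
        (Psi n k m hm y).left (a + (phi n k m hm x).toAdd) := by
  rw [map_mul, SemidirectProduct.mul_left]
  rfl

lemma Psi_inv_left (hm : Hm k m) (x : GG n k m) (a : AV k m) :
    (Psi n k m hm x⁻¹).left a
      = ((Psi n k m hm x).left (a - (phi n k m hm x).toAdd))⁻¹ := by
  rw [map_inv, SemidirectProduct.inv_left]
  show ((actHom n k m (Psi n k m hm x).right⁻¹) (Psi n k m hm x).left⁻¹) a = _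
  rw [actHom_apply, Pi.inv_apply]
  congr 1
  rw [toAdd_inv, sub_eq_add_neg]
  rfl

lemma Psi_one_left (hm : Hm k m) (a : AV k m) :
    (Psi n k m hm 1).left a = 1 := by
  rw [map_one, SemidirectProduct.one_left]
  rfl

lemma Psi_ee_pow_left (hm : Hm k m) (j : Fin k) (u : ℕ) (a : AV k m) :
    (Psi n k m hm (ee n k m j ^ u)).left a
      = bB n k m hm j a ((a j).val) *
        (bB n k m hm j a ((a j + (u : ZMod (m j.val))).val))⁻¹ := by
  rw [map_pow, Psi_ee, sd_pow_left]
  exact tel n k m hm j a u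

lemma Psi_chunk_left (hm : Hm k m) (u : ℕ → ℕ) (s t : ℕ) (a : AV k m)
    (ha : ∀ i : Fin k, i.val + 1 < t → a i = 0) :
    (Psi n k m hm (eChunk n k m u s t)).left a = 1 := by
  induction t generalizing a with
  | zero => exact Psi_one_left n k m hm a
  | succ t ih =>
    rw [eChunk_succ]
    by_cases hst : s ≤ t
    · rw [if_pos hst, Psi_mul_left]
      have h1 : (Psi n k m hm (if h : t < k then ee n k m ⟨t, h⟩ ^ u t else 1)).left a = 1 := by
        by_cases hk : t < k
        · rw [dif_pos hk, Psi_ee_pow_left,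
            bB_trivial n k m hm ⟨t, hk⟩ a (fun i hi => ha i (Nat.succ_lt_succ hi)),
            bB_trivial n k m hm ⟨t, hk⟩ a (fun i hi => ha i (Nat.succ_lt_succ hi)), inv_one,
            mul_one]
        · rw [dif_neg hk]
          exact Psi_one_left n k m hm a
      rw [h1, one_mul]
      apply ih
      intro i hi
      by_cases hk : t < k
      · rw [dif_pos hk, map_pow, phi_ee, toAdd_pow]
        have htoadd : Multiplicative.toAdd (Multiplicative.ofAdd (dl k m ⟨t, hk⟩)) =
          dl k m ⟨t, hk⟩ := rfl
        rw [htoadd, Pi.add_apply, smul_dl,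
          Pi.single_eq_of_ne (by simp [Fin.ext_iff]; omega), add_zero]
        exact ha i (by omega)
      · rw [dif_neg hk, map_one, toAdd_one, add_zero]
        exact ha i (by omega)
    · rw [if_neg hst]
      exact Psi_one_left n k m hm a

lemma ee_pow_uFun_of_cast (hm : Hm k m) (a : AV k m) (u : ℕ → ℕ) (i : ℕ) (hik : i < k)
    (h : a ⟨i, hik⟩ = ((u i : ℕ) : ZMod (m i))) :
    ee n k m ⟨i, hik⟩ ^ uFun k m a i = ee n k m ⟨i, hik⟩ ^ u i := by
  haveI : NeZero (m i) := ⟨by have := hm i hik; omega⟩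
  unfold uFun
  rw [dif_pos hik, h]
  by_cases h0 : ((u i : ℕ) : ZMod (m i)) = 0
  · rw [if_pos h0]
    have : u i % m i = 0 := by
      have := ZMod.val_natCast (n := m i) (u i)
      rw [h0, ZMod.val_zero] at this
      omega
    rw [ee_pow_m, ee_pow_mod n k m ⟨i, hik⟩ (u i), this, pow_zero]
  · rw [if_neg h0, ZMod.val_natCast, ← ee_pow_mod]


lemma theta_of (hm : Hm k m) (b : B n k m) :
    (Psi n k m hm b.val).left 0 = FreeGroup.of b := by
  obtain hb0 := b.2
  rcases hb0 with hb | hb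
  · obtain ⟨t, u, ht2, htk, hlow, hex, hw, hup, hx⟩ := hb
    obtain ⟨t1, rfl⟩ : ∃ t1, t = t1 + 1 := ⟨t - 1, by omega⟩
    simp only [Nat.add_sub_cancel] at hlow hex hw hx
    have hj : t1 < k := by omega
    set j : Fin k := ⟨t1, hj⟩ with hjdef
    have hjval : j.val = t1 := rfl
    have hmt1 : m j.val = m t1 := rfl
    have hmt2 : 2 ≤ m t1 := hm t1 hj
    set p : AV k m := asum k m u (t1 + 1) k with hpdef
    set dC : AV k m := asum k m u 0 t1 with hdCdef
    have hTee : eChunk n k m u t1 (t1 + 1) = ee n k m j ^ u t1 := eChunk_single n k m u t1 hj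
    have hphiP : phi n k m hm (eChunk n k m u (t1+1) k) = Multiplicative.ofAdd p :=
      phi_eChunk n k m hm u (t1+1) k
    have hphiC : phi n k m hm (eChunk n k m u 0 t1) = Multiplicative.ofAdd dC :=
      phi_eChunk n k m hm u 0 t1
    have hphiT : phi n k m hm (ee n k m j ^ u t1) =
        Multiplicative.ofAdd ((u t1) • dl k m j) := by
      rw [map_pow, phi_ee, ← ofAdd_nsmul]
    have hpcoord : ∀ i : Fin k, i.val < t1 + 1 → p i = 0 := by
      intro i hi
      rw [hpdef, asum_coord k m u (t1+1) k le_rfl i, if_neg (by omega)]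
    have hdCj : dC j = 0 := by
      rw [hdCdef, asum_coord k m u 0 t1 (by omega) j, if_neg (by omega)]
    have hcoord : ∀ i : Fin k, i.val ≠ t1 →
        (p + dC : AV k m) i = ((u i.val : ℕ) : ZMod (m i.val)) := by
      intro i hi
      rw [Pi.add_apply, hpdef, hdCdef, asum_coord k m u (t1+1) k le_rfl i,
        asum_coord k m u 0 t1 (by omega) i]
      by_cases hlt : i.val < t1
      · rw [if_neg (by omega), if_pos ⟨Nat.zero_le _, hlt⟩, zero_add]
      · rw [if_pos ⟨by omega, i.isLt⟩, if_neg (by omega), add_zero]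
    have hut1 : u t1 < m t1 := by omega
    have key : (Psi n k m hm (eChunk n k m u (t1+1) k *
        ⁅eChunk n k m u t1 (t1+1), eChunk n k m u 0 t1⁆ *
        (eChunk n k m u (t1+1) k)⁻¹)).left 0 = bB n k m hm j (p + dC) (u t1) := by
      rw [commutatorElement_def, hTee]
      rw [Psi_mul_left, Psi_mul_left, Psi_mul_left, Psi_mul_left, Psi_mul_left,
        Psi_inv_left, Psi_inv_left, Psi_inv_left]
      simp only [map_mul, map_inv, hphiP, hphiC, hphiT, toAdd_mul, toAdd_inv, toAdd_ofAdd,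
        zero_add]
      have h4 : p + (u t1 • dl k m j + dC) - u t1 • dl k m j = p + dC := by abel
      have h5 : p + (u t1 • dl k m j + dC + -(u t1 • dl k m j)) - dC = p := by abel
      have h6 : p + (u t1 • dl k m j + dC + -(u t1 • dl k m j) + -dC) - p = 0 := by abel
      rw [h4, h5, h6]
      have F1 : (Psi n k m hm (eChunk n k m u (t1+1) k)).left 0 = 1 :=
        Psi_chunk_left n k m hm u (t1+1) k 0 (fun i _ => rfl)
      have F2 : (Psi n k m hm (ee n k m j ^ u t1)).left p = 1 := by
        rw [Psi_ee_pow_left, bB_trivial n k m hm j p (fun i hi => hpcoord i (by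
          have hi' : i.val < t1 := hi
          omega)), bB_trivial n k m hm j p (fun i hi => hpcoord i (by
          have hi' : i.val < t1 := hi
          omega)), inv_one, mul_one]
      have F3 : (Psi n k m hm (eChunk n k m u 0 t1)).left (p + u t1 • dl k m j) = 1 := by
        refine Psi_chunk_left n k m hm u 0 t1 _ (fun i hi => ?_)
        rw [Pi.add_apply, hpcoord i (by omega), smul_dl,
          Pi.single_eq_of_ne (fun h => absurd (congrArg Fin.val h) (by
            show ¬(i.val = t1)
            omega)), add_zero]
      have F4 : (Psi n k m hm (ee n k m j ^ u t1)).left (p + dC) =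
          (bB n k m hm j (p + dC) (u t1))⁻¹ := by
        rw [Psi_ee_pow_left]
        have hpdCj : (p + dC : AV k m) j = 0 := by
          rw [Pi.add_apply, hpcoord j (by omega), hdCj, add_zero]
        rw [hpdCj, ZMod.val_zero, bB_zero, one_mul, zero_add,
          ZMod.val_cast_of_lt (show u t1 < m j.val from hut1)]
      have F5 : (Psi n k m hm (eChunk n k m u 0 t1)).left p = 1 := by
        refine Psi_chunk_left n k m hm u 0 t1 _ (fun i hi => ?_)
        exact hpcoord i (by omega)
      rw [F1, F2, F3, F4, F5]
      simp
    rw [hx, key]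
    have hcond : S1cond k m (p + dC) j (u t1) := by
      obtain ⟨i0, hi0, hi0ne⟩ := hex
      have hu0 := hlow i0 hi0
      refine ⟨⟨⟨i0, by omega⟩, hi0, ?_⟩, hw.1, hw.2⟩
      rw [hcoord ⟨i0, by omega⟩ (show i0 ≠ t1 by omega)]
      show ((u i0 : ℕ) : ZMod (m i0)) ≠ 0
      intro hzero
      have := congrArg ZMod.val hzero
      rw [ZMod.val_natCast, ZMod.val_zero, Nat.mod_eq_of_lt (by omega)] at this
      omega
    unfold bB
    rw [dif_pos hcond]
    refine congrArg FreeGroup.of (Subtype.ext ?_)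
    show S1eltG n k m (p + dC) j (u t1) = b.val
    rw [hx]
    unfold S1eltG
    have e1 : eChunk n k m (Function.update (uFun k m (p + dC)) j.val (u t1)) (j.val + 1) k
        = eChunk n k m u (t1 + 1) k := by
      refine eChunk_congr n k m (fun i hik h1 h2 => ?_)
      have h1' : t1 + 1 ≤ i := h1
      rw [Function.update_of_ne (by omega)]
      exact ee_pow_uFun_of_cast n k m hm _ u i hik (hcoord ⟨i, hik⟩ (show i ≠ t1 by omega))
    have e2 : eChunk n k m (Function.update (uFun k m (p + dC)) j.val (u t1)) j.val (j.val + 1)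
        = eChunk n k m u t1 (t1 + 1) := by
      refine eChunk_congr n k m (fun i hik h1 h2 => ?_)
      have h1' : t1 ≤ i := h1
      have h2' : i < t1 + 1 := h2
      have : i = t1 := by omega
      subst this
      rw [Function.update_self]
    have e3 : eChunk n k m (Function.update (uFun k m (p + dC)) j.val (u t1)) 0 j.val
        = eChunk n k m u 0 t1 := by
      have hjv : eChunk n k m u 0 j.val = eChunk n k m u 0 t1 := rfl
      rw [← hjv]
      refine eChunk_congr n k m (fun i hik h1 h2 => ?_)
      have h2' : i < t1 := h2
      rw [Function.update_of_ne (by omega)]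
      exact ee_pow_uFun_of_cast n k m hm _ u i hik (hcoord ⟨i, hik⟩ (show i ≠ t1 by omega))
    rw [e1, e2, e3]
  · obtain ⟨l, u, hu, hx⟩ := hb
    set aE : AV k m := asum k m u 0 k with haEdef
    have hphiE : phi n k m hm (eChunk n k m u 0 k) = Multiplicative.ofAdd aE :=
      phi_eChunk n k m hm u 0 k
    have hE0 : (Psi n k m hm (eChunk n k m u 0 k)).left 0 = 1 :=
      Psi_chunk_left n k m hm u 0 k 0 (fun i _ => rfl)
    have key : (Psi n k m hm (eChunk n k m u 0 k * hh n k m l *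
        (eChunk n k m u 0 k)⁻¹)).left 0 = LHB n k m hm l aE := by
      rw [Psi_mul_left, Psi_mul_left, Psi_inv_left]
      simp only [map_mul, phi_hh, mul_one, hphiE, toAdd_ofAdd, zero_add]
      rw [sub_self, hE0, one_mul, inv_one, mul_one, Psi_hh]
    rw [hx, key]
    unfold LHB
    refine congrArg FreeGroup.of (Subtype.ext ?_)
    show S2eltG n k m l aE = b.val
    rw [hx]
    unfold S2eltG
    have e1 : eChunk n k m (uFun k m aE) 0 k = eChunk n k m u 0 k := by
      refine eChunk_congr n k m (fun i hik h1 h2 => ?_)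
      refine ee_pow_uFun_of_cast n k m hm _ u i hik ?_
      rw [haEdef, asum_coord k m u 0 k le_rfl ⟨i, hik⟩, if_pos ⟨Nat.zero_le _, hik⟩]
    rw [e1]

noncomputable def theta (hm : Hm k m) :
    ↥(Subgroup.closure (S1set n k m ∪ S2set n k m)) →* FreeGroup (B n k m) :=
  MonoidHom.mk' (fun x => (Psi n k m hm x.val).left 0) (by
    rintro ⟨x, hx⟩ ⟨y, hy⟩
    show (Psi n k m hm (x * y)).left 0 = _
    rw [Psi_mul_left]
    have hx1 : phi n k m hm x = 1 := by
      have hker : x ∈ (phi n k m hm).ker := (closure_eq_ker n k m hm) ▸ hx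
      exact hker
    rw [hx1, toAdd_one, add_zero])

lemma theta_apply (hm : Hm k m) (x : ↥(Subgroup.closure (S1set n k m ∪ S2set n k m))) :
    theta n k m hm x = (Psi n k m hm x.val).left 0 := rfl

end Cor314


/-- **Corollary 3.14.** The subgroup `F = ⟨S₁ ∪ S₂⟩` of `G` is freely generated by the set
`S₁ ∪ S₂` (it has the universal property of the free group on `S₁ ∪ S₂`), and
`[G : F] = m₁⋯m_k`. -/
theorem F_free_of_index_prod
    (n k : ℕ) (m : ℕ → ℕ) (hk : 1 ≤ k) (hm : ∀ i < k, 2 ≤ m i)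
    (hexc1 : ¬(n = 0 ∧ k = 1)) (hexc2 : ¬(n = 0 ∧ k = 2 ∧ m 0 = 2 ∧ m 1 = 2)) :
    (∀ (H : Type) [Group H] (f : ↥(S1set n k m ∪ S2set n k m) → H),
      ∃! φ : ↥(Subgroup.closure (S1set n k m ∪ S2set n k m)) →* H,
        ∀ s : ↥(S1set n k m ∪ S2set n k m),
          φ ⟨s.1, Subgroup.subset_closure s.2⟩ = f s) ∧
    (Subgroup.closure (S1set n k m ∪ S2set n k m)).index = ∏ i ∈ Finset.range k, m i := by
  constructor
  · intro H _ f
    set φH : ↥(Subgroup.closure (S1set n k m ∪ S2set n k m)) →* H :=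
      (FreeGroup.lift f).comp (Cor314.theta n k m hm) with hφH
    have hExt : ∀ s : ↥(S1set n k m ∪ S2set n k m),
        φH ⟨s.1, Subgroup.subset_closure s.2⟩ = f s := by
      intro s
      show FreeGroup.lift f ((Cor314.Psi n k m hm s.1).left 0) = f s
      rw [Cor314.theta_of n k m hm s]
      exact FreeGroup.lift_apply_of
    refine ⟨φH, hExt, fun ψ hψ => ?_⟩
    ext x
    obtain ⟨x, hx⟩ := x
    refine Subgroup.closure_induction
      (p := fun g hg => ψ ⟨g, hg⟩ = φH ⟨g, hg⟩) ?_ ?_ ?_ ?_ hx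
    · intro s hs
      exact (hψ ⟨s, hs⟩).trans (hExt ⟨s, hs⟩).symm
    · show ψ 1 = φH 1
      rw [map_one, map_one]
    · intro g1 g2 hg1 hg2 ih1 ih2
      show ψ (⟨g1, hg1⟩ * ⟨g2, hg2⟩) = φH (⟨g1, hg1⟩ * ⟨g2, hg2⟩)
      rw [map_mul, map_mul, ih1, ih2]
    · intro g hg ih
      show ψ (⟨g, hg⟩⁻¹) = φH (⟨g, hg⟩⁻¹)
      rw [map_inv, map_inv, ih]
  · exact Cor314.index_eq n k m hm
end

section
/- Let n ≥ 0, k ≥ 1 and m₁,…,m_k ≥ 2 be integers such that (n,k,m₁,…,m_k) is neither of the form (0,1,m₁) nor equal to (0,2,2,2). Let Ĝ = ⟨e₁,…,e_k, h₁,…,h_{2n}, z ∣ e₁^{m₁} = ⋯ = e_k^{m_k} = z, [h₁,z] = ⋯ = [h_{2n},z] = 1⟩ and G = ⟨e₁,…,e_k, h₁,…,h_{2n} ∣ e₁^{m₁} = ⋯ = e_k^{m_k} = 1⟩. Then in Ĝ the element z has infinite order, the cyclic subgroup ⟨z⟩ equals the center of Ĝ, and the quotient group Ĝ/⟨z⟩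 is isomorphic to G. -/
open Monoid Monoid.CoprodI

open scoped commutatorElement

section CenterCoprodI
variable {ι : Type*} {G : ι → Type*} [∀ i, Group (G i)]

theorem my_toWord_eq {i₁ j₁ i₂ j₂ : ι} (w₁ : NeWord G i₁ j₁) (w₂ : NeWord G i₂ j₂)
    (h : w₁.prod = w₂.prod) : w₁.toWord = w₂.toWord := by
  classical
  exact Word.equiv.symm.injective (show w₁.toWord.prod = w₂.toWord.prod from h)

theorem my_head_idx_eq {i₁ j₁ i₂ j₂ : ι} (w₁ : NeWord G i₁ j₁) (w₂ : NeWord G i₂ j₂)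
    (h : w₁.prod = w₂.prod) : i₁ = i₂ := by
  have h2 := my_toWord_eq w₁ w₂ h
  have h3 : w₁.toList.head? = w₂.toList.head? :=
    congrArg List.head? (show w₁.toList = w₂.toList from congrArg Word.toList h2)
  rw [NeWord.toList_head?, NeWord.toList_head?] at h3
  exact congrArg Sigma.fst (Option.some.inj h3)

theorem my_decomp {i j : ι} (w : NeWord G i j) :
    (i = j ∧ ∃ x : G j, x ≠ 1 ∧ w.prod = CoprodI.of x) ∨
    (∃ (t : ι) (_ : t ≠ j) (w' : NeWord G i t) (y : G j), y ≠ 1 ∧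
      w.prod = w'.prod * CoprodI.of y) := by
  induction w with
  | singleton x hx => exact Or.inl ⟨rfl, x, hx, by simp⟩
  | @append i j k l w₁ hne w₂ ih₁ ih₂ =>
    rcases ih₂ with ⟨rfl, x, hx, hp⟩ | ⟨t, ht, w', y, hy, hp⟩
    · exact Or.inr ⟨j, hne, w₁, x, hx, by rw [NeWord.append_prod, hp]⟩
    · refine Or.inr ⟨t, ht, NeWord.append w₁ hne w', y, hy, ?_⟩
      rw [NeWord.append_prod, NeWord.append_prod, hp, mul_assoc]

theorem my_center_eq_bot (H : ∀ i : ι, ∃ j, j ≠ i ∧ ∃ x : G j, x ≠ 1)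
    {g : CoprodI G} (hg : g ∈ Subgroup.center (CoprodI G)) : g = 1 := by
  classical
  by_contra hne
  have hgcomm : ∀ b : CoprodI G, b * g * b⁻¹ = g := fun b => by
    rw [Subgroup.mem_center_iff.1 hg b, mul_inv_cancel_right]
  -- get a NeWord for g
  have hwne : Word.equiv g ≠ Word.empty := by
    intro h
    apply hne
    have := congrArg Word.equiv.symm h
    rwa [Equiv.symm_apply_apply] at this
  obtain ⟨i, j, w', hw'⟩ := NeWord.of_word _ hwne
  have hprod : w'.prod = g := by
    rw [NeWord.prod, hw']
    exact Word.equiv.symm_apply_apply g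
  obtain ⟨l, hl, x, hx⟩ := H i
  have hxinv : (CoprodI.of x)⁻¹ = CoprodI.of x⁻¹ := by simp
  rcases my_decomp w' with ⟨rfl, c, hc, hpc⟩ | ⟨t, ht, w'', y, hy, hp⟩
  · -- g = of c, one letter
    have hc' : (CoprodI.of c : CoprodI G) = g := by rw [← hprod, hpc]
    set A := NeWord.append (NeWord.append (NeWord.singleton x hx) hl (NeWord.singleton c hc))
      (Ne.symm hl) (NeWord.singleton x⁻¹ (inv_ne_one.2 hx)) with hA
    have : A.prod = w'.prod := by
      rw [hA, NeWord.append_prod, NeWord.append_prod, hprod]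
      simp only [NeWord.prod_singleton]
      rw [hc', ← hxinv, hgcomm]
    exact hl (my_head_idx_eq A w' this)
  · have hpg : w''.prod * CoprodI.of y = g := by rw [← hprod, hp]
    by_cases hyx : CoprodI.of y * (CoprodI.of x)⁻¹ = (1 : CoprodI G)
    · set A := NeWord.append (NeWord.singleton x hx) hl w'' with hA
      have : A.prod = w'.prod := by
        rw [hA, NeWord.append_prod, NeWord.prod_singleton, hprod]
        have : CoprodI.of x * g * (CoprodI.of x)⁻¹ = g := hgcomm _
        calc CoprodI.of x * w''.prod
            = CoprodI.of x * w''.prod * (CoprodI.of y * (CoprodI.of x)⁻¹) := by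
              rw [hyx, mul_one]
          _ = CoprodI.of x * (w''.prod * CoprodI.of y) * (CoprodI.of x)⁻¹ := by group
          _ = g := by rw [hpg, hgcomm]
      exact hl (my_head_idx_eq A w' this)
    · by_cases hlj : l = j
      · subst hlj
        have hxy : y * x⁻¹ ≠ 1 := by
          intro h
          apply hyx
          rw [hxinv, ← MonoidHom.map_mul, h, MonoidHom.map_one]
        set A := NeWord.append (NeWord.append (NeWord.singleton x hx) hl w'') ht
          (NeWord.singleton (y * x⁻¹) hxy) with hA
        have : A.prod = w'.prod := by
          rw [hA, NeWord.append_prod, NeWord.append_prod, hprod]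
          simp only [NeWord.prod_singleton]
          rw [MonoidHom.map_mul, ← hxinv]
          calc CoprodI.of x * w''.prod * (CoprodI.of y * (CoprodI.of x)⁻¹)
              = CoprodI.of x * (w''.prod * CoprodI.of y) * (CoprodI.of x)⁻¹ := by group
            _ = g := by rw [hpg, hgcomm]
        exact hl (my_head_idx_eq A w' this)
      · set A := NeWord.append (NeWord.append (NeWord.singleton x hx) hl w'') ht
          (NeWord.append (NeWord.singleton y hy) (fun h => hlj h.symm)
            (NeWord.singleton x⁻¹ (inv_ne_one.2 hx))) with hA
        have : A.prod = w'.prod := by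
          rw [hA, NeWord.append_prod, NeWord.append_prod, NeWord.append_prod, hprod]
          simp only [NeWord.prod_singleton]
          rw [← hxinv]
          calc CoprodI.of x * w''.prod * (CoprodI.of y * (CoprodI.of x)⁻¹)
              = CoprodI.of x * (w''.prod * CoprodI.of y) * (CoprodI.of x)⁻¹ := by group
            _ = g := by rw [hpg, hgcomm]
        exact hl (my_head_idx_eq A w' this)

end CenterCoprodI




/-- The relators `eᵢ^{mᵢ} z⁻¹` and `[h_j, z]` defining the central extension `Ĝ`. -/
def GhatRels (n k : ℕ) (m : ℕ → ℕ) : Set (FreeGroup ((Fin k ⊕ Fin (2 * n)) ⊕ Unit)) :=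
  Set.range (fun i : Fin k =>
      FreeGroup.of (Sum.inl (Sum.inl i)) ^ m i.val * (FreeGroup.of (Sum.inr ()))⁻¹) ∪
  Set.range (fun j : Fin (2 * n) =>
      ⁅(FreeGroup.of (Sum.inl (Sum.inr j)) : FreeGroup ((Fin k ⊕ Fin (2 * n)) ⊕ Unit)),
        FreeGroup.of (Sum.inr ())⁆)

/-- The group `Ĝ = ⟨e₁,…,e_k, h₁,…,h_{2n}, z ∣ e₁^{m₁} = ⋯ = e_k^{m_k} = z,
[h₁,z] = ⋯ = [h_{2n},z] = 1⟩`. -/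
abbrev GHat (n k : ℕ) (m : ℕ → ℕ) : Type := PresentedGroup (GhatRels n k m)

/-- The generator `e_{i+1}` of `Ĝ` (0-indexed). -/
def eeHat (n k : ℕ) (m : ℕ → ℕ) (i : Fin k) : GHat n k m :=
  PresentedGroup.of (Sum.inl (Sum.inl i))

/-- The generator `h_{j+1}` of `Ĝ` (0-indexed). -/
def hhHat (n k : ℕ) (m : ℕ → ℕ) (j : Fin (2 * n)) : GHat n k m :=
  PresentedGroup.of (Sum.inl (Sum.inr j))

/-- The central generator `z` of `Ĝ`. -/
def zHat (n k : ℕ) (m : ℕ → ℕ) : GHat n k m := PresentedGroup.of (Sum.inr ())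

namespace ZHatAux

/-- relators are killed in a presented group -/
theorem presented_rel {α : Type*} (rels : Set (FreeGroup α)) {r : FreeGroup α} (h : r ∈ rels) :
    PresentedGroup.mk rels r = 1 :=
  (QuotientGroup.eq_one_iff r).2 (Subgroup.subset_normalClosure h)

/-- cyclic group of order `mi` as a presented group -/
abbrev Cyc (mi : ℕ) : Type := PresentedGroup ({FreeGroup.of () ^ mi} : Set (FreeGroup Unit))

def cg (mi : ℕ) : Cyc mi := PresentedGroup.of ()

theorem cg_pow (mi : ℕ) : cg mi ^ mi = 1 := by
  have := presented_rel ({FreeGroup.of () ^ mi} : Set (FreeGroup Unit)) rfl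
  rwa [map_pow] at this

theorem cg_ne_one {mi : ℕ} (h : 2 ≤ mi) : cg mi ≠ 1 := by
  haveI : Fact (1 < mi) := ⟨h⟩
  have hrel : ∀ r ∈ ({FreeGroup.of () ^ mi} : Set (FreeGroup Unit)),
      FreeGroup.lift (fun _ : Unit => Multiplicative.ofAdd (1 : ZMod mi)) r = 1 := by
    rintro r rfl
    rw [map_pow, FreeGroup.lift_apply_of, ← ofAdd_nsmul, nsmul_eq_mul, mul_one,
      ZMod.natCast_self, ofAdd_zero]
  intro hc
  have h3 : (PresentedGroup.toGroup hrel) (cg mi) = Multiplicative.ofAdd (1 : ZMod mi) :=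
    PresentedGroup.toGroup.of hrel
  have h2 : Multiplicative.ofAdd (1 : ZMod mi) = 1 := by rw [← h3, hc, map_one]
  exact one_ne_zero (Multiplicative.ofAdd.injective (h2.trans ofAdd_zero.symm))

/-- the factors of the free product -/
abbrev Fac (n k : ℕ) (m : ℕ → ℕ) : Fin k ⊕ Unit → Type :=
  Sum.elim (fun i => Cyc (m i)) (fun _ => FreeGroup (Fin (2 * n)))

instance (n k : ℕ) (m : ℕ → ℕ) : ∀ x, Group (Fac n k m x)
  | .inl _ => inferInstanceAs (Group (Cyc _))
  | .inr _ => inferInstanceAs (Group (FreeGroup _))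

theorem ee_pow (n k : ℕ) (m : ℕ → ℕ) (i : Fin k) : ee n k m i ^ m i = 1 := by
  have := presented_rel (Grels n k m) (Set.mem_range_self (f := fun i : Fin k =>
    FreeGroup.of (Sum.inl i) ^ m i.val) i)
  rwa [map_pow] at this

def Φ (n k : ℕ) (m : ℕ → ℕ) : Monoid.CoprodI (Fac n k m) →* GG n k m :=
  Monoid.CoprodI.lift fun x => match x with
    | .inl i => PresentedGroup.toGroup (f := fun _ : Unit => ee n k m i)
        (by rintro r rfl; rw [map_pow, FreeGroup.lift_apply_of]; exact ee_pow n k m i)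
    | .inr _ => FreeGroup.lift fun j => hh n k m j

def Ψ (n k : ℕ) (m : ℕ → ℕ) : GG n k m →* Monoid.CoprodI (Fac n k m) :=
  PresentedGroup.toGroup (f := fun x : Fin k ⊕ Fin (2 * n) => match x with
    | Sum.inl i => Monoid.CoprodI.of (M := Fac n k m) (i := Sum.inl i) (cg (m i))
    | Sum.inr j => Monoid.CoprodI.of (M := Fac n k m) (i := Sum.inr ()) (FreeGroup.of j))
    (by
      rintro r ⟨i, rfl⟩
      dsimp only
      rw [map_pow, FreeGroup.lift_apply_of]
      show (Monoid.CoprodI.of (M := Fac n k m) (i := Sum.inl i) (cg (m i))) ^ m i = 1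
      erw [← map_pow, cg_pow, map_one])

theorem Phi_cg (n k : ℕ) (m : ℕ → ℕ) (i : Fin k) :
    Φ n k m (Monoid.CoprodI.of (M := Fac n k m) (i := Sum.inl i) (cg (m i))) = ee n k m i := by
  rw [Φ]; erw [Monoid.CoprodI.lift_of]
  exact PresentedGroup.toGroup.of _

theorem Phi_fg (n k : ℕ) (m : ℕ → ℕ) (j : Fin (2 * n)) :
    Φ n k m (Monoid.CoprodI.of (M := Fac n k m) (i := Sum.inr ()) (FreeGroup.of j)) =
      hh n k m j := by
  rw [Φ]; erw [Monoid.CoprodI.lift_of]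
  exact FreeGroup.lift_apply_of

theorem Psi_e (n k : ℕ) (m : ℕ → ℕ) (i : Fin k) :
    Ψ n k m (ee n k m i) = Monoid.CoprodI.of (M := Fac n k m) (i := Sum.inl i) (cg (m i)) :=
  PresentedGroup.toGroup.of _

theorem Psi_h (n k : ℕ) (m : ℕ → ℕ) (j : Fin (2 * n)) :
    Ψ n k m (hh n k m j) =
      Monoid.CoprodI.of (M := Fac n k m) (i := Sum.inr ()) (FreeGroup.of j) :=
  PresentedGroup.toGroup.of _

theorem comp1 (n k : ℕ) (m : ℕ → ℕ) :
    (Φ n k m).comp (Ψ n k m) = MonoidHom.id (GG n k m) := by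
  apply PresentedGroup.ext
  rintro (i | j) <;> simp only [MonoidHom.comp_apply, MonoidHom.id_apply]
  · exact (congrArg _ (Psi_e n k m i)).trans (Phi_cg n k m i)
  · exact (congrArg _ (Psi_h n k m j)).trans (Phi_fg n k m j)

theorem comp2 (n k : ℕ) (m : ℕ → ℕ) :
    (Ψ n k m).comp (Φ n k m) = MonoidHom.id (Monoid.CoprodI (Fac n k m)) := by
  apply Monoid.CoprodI.ext_hom
  rintro (i | ⟨⟩)
  · refine PresentedGroup.ext fun x => ?_
    cases x
    exact (congrArg (Ψ n k m) (Phi_cg n k m i)).trans (Psi_e n k m i)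
  · refine FreeGroup.ext_hom _ _ fun a => ?_
    exact (congrArg (Ψ n k m) (Phi_fg n k m a)).trans (Psi_h n k m a)

/-- `G` is isomorphic to the free product. -/
def GGiso (n k : ℕ) (m : ℕ → ℕ) : GG n k m ≃* Monoid.CoprodI (Fac n k m) :=
  MonoidHom.toMulEquiv (Ψ n k m) (Φ n k m) (comp1 n k m) (comp2 n k m)

theorem center_GG (n k : ℕ) (m : ℕ → ℕ) (hk : 1 ≤ k) (hm : ∀ i < k, 2 ≤ m i)
    (hexc1 : ¬(n = 0 ∧ k = 1)) {g : GG n k m} (hg : g ∈ Subgroup.center (GG n k m)) :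
    g = 1 := by
  have key : ∃ a b : Fin k ⊕ Unit, a ≠ b ∧
      (∃ x : Fac n k m a, x ≠ 1) ∧ (∃ x : Fac n k m b, x ≠ 1) := by
    rcases Nat.eq_zero_or_pos n with hn | hn
    · have hk2 : 2 ≤ k := by
        have : k ≠ 1 := fun h => hexc1 ⟨hn, h⟩
        omega
      refine ⟨Sum.inl ⟨0, by omega⟩, Sum.inl ⟨1, by omega⟩, by simp, ?_, ?_⟩
      · exact ⟨cg (m 0), cg_ne_one (hm 0 (by omega))⟩
      · exact ⟨cg (m 1), cg_ne_one (hm 1 (by omega))⟩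
    · refine ⟨Sum.inl ⟨0, hk⟩, Sum.inr (), by simp, ?_, ?_⟩
      · exact ⟨cg (m 0), cg_ne_one (hm 0 hk)⟩
      · exact ⟨FreeGroup.of (⟨0, by omega⟩ : Fin (2 * n)), FreeGroup.of_ne_one _⟩
  have H : ∀ i : Fin k ⊕ Unit, ∃ j, j ≠ i ∧ ∃ x : Fac n k m j, x ≠ 1 := by
    obtain ⟨a, b, hab, ha, hb⟩ := key
    intro i
    by_cases h : a = i
    · subst h
      exact ⟨b, Ne.symm hab, hb⟩
    · exact ⟨a, h, ha⟩
  have hc : (GGiso n k m) g ∈ Subgroup.center (Monoid.CoprodI (Fac n k m)) := by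
    rw [Subgroup.mem_center_iff]
    intro b
    obtain ⟨a, rfl⟩ := (GGiso n k m).surjective b
    rw [← map_mul, Subgroup.mem_center_iff.1 hg a, map_mul]
  have h1 := my_center_eq_bot H hc
  exact (GGiso n k m).injective (h1.trans (map_one (GGiso n k m)).symm)

/-! ### The `Ĝ` side -/

theorem eeHat_pow (n k : ℕ) (m : ℕ → ℕ) (i : Fin k) :
    eeHat n k m i ^ m i = zHat n k m := by
  have := presented_rel (GhatRels n k m)
    (Set.mem_union_left _ (Set.mem_range_self (f := fun i : Fin k =>
      FreeGroup.of (Sum.inl (Sum.inl i)) ^ m i.val * (FreeGroup.of (Sum.inr ()))⁻¹) i))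
  rw [map_mul, map_pow, map_inv] at this
  exact mul_inv_eq_one.1 this

theorem hhHat_comm (n k : ℕ) (m : ℕ → ℕ) (j : Fin (2 * n)) :
    Commute (hhHat n k m j) (zHat n k m) := by
  have := presented_rel (GhatRels n k m)
    (Set.mem_union_right _ (Set.mem_range_self (f := fun j : Fin (2 * n) =>
      ⁅(FreeGroup.of (Sum.inl (Sum.inr j)) : FreeGroup ((Fin k ⊕ Fin (2 * n)) ⊕ Unit)),
        FreeGroup.of (Sum.inr ())⁆) j))
  rw [map_commutatorElement] at this
  exact commutatorElement_eq_one_iff_commute.1 this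

theorem zHat_central (n k : ℕ) (m : ℕ → ℕ) (g : GHat n k m) :
    Commute g (zHat n k m) := by
  have : g ∈ Subgroup.centralizer {zHat n k m} := by
    refine PresentedGroup.generated_by (GhatRels n k m) _ ?_ g
    rintro ((i | j) | ⟨⟩) <;> rw [Subgroup.mem_centralizer_iff] <;>
      rintro y ⟨rfl⟩
    · have hc : Commute (eeHat n k m i) (zHat n k m) := by
        rw [← eeHat_pow n k m i]
        exact (Commute.refl _).pow_right _
      exact hc.symm.eq
    · exact (hhHat_comm n k m j).symm.eq
    · exact rfl
  have := Subgroup.mem_centralizer_iff.1 this (zHat n k m) rfl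
  exact this.symm

theorem zHat_mem_center (n k : ℕ) (m : ℕ → ℕ) :
    zHat n k m ∈ Subgroup.center (GHat n k m) :=
  Subgroup.mem_center_iff.2 fun g => (zHat_central n k m g).eq

instance zpowers_normal (n k : ℕ) (m : ℕ → ℕ) : (Subgroup.zpowers (zHat n k m)).Normal := by
  constructor
  intro x hx g
  obtain ⟨t, rfl⟩ := hx
  show g * zHat n k m ^ t * g⁻¹ ∈ Subgroup.zpowers (zHat n k m)
  have hcomm : Commute g (zHat n k m ^ t) := (zHat_central n k m g).zpow_right t
  rw [hcomm.eq, mul_inv_cancel_right]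
  exact Subgroup.mem_zpowers_iff.2 ⟨t, rfl⟩

def piH (n k : ℕ) (m : ℕ → ℕ) : GHat n k m →* GG n k m :=
  PresentedGroup.toGroup (f := fun x : (Fin k ⊕ Fin (2 * n)) ⊕ Unit => match x with
    | .inl (.inl i) => ee n k m i
    | .inl (.inr j) => hh n k m j
    | .inr _ => (1 : GG n k m))
    (by
      rintro r (⟨i, rfl⟩ | ⟨j, rfl⟩)
      · rw [map_mul, map_pow, map_inv, FreeGroup.lift_apply_of, FreeGroup.lift_apply_of]
        show ee n k m i ^ m i * (1 : GG n k m)⁻¹ = 1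
        rw [ee_pow, inv_one, mul_one]
      · rw [map_commutatorElement, FreeGroup.lift_apply_of, FreeGroup.lift_apply_of]
        show ⁅hh n k m j, (1 : GG n k m)⁆ = 1
        simp)

theorem piH_e (n k : ℕ) (m : ℕ → ℕ) (i : Fin k) :
    piH n k m (eeHat n k m i) = ee n k m i := PresentedGroup.toGroup.of _

theorem piH_h (n k : ℕ) (m : ℕ → ℕ) (j : Fin (2 * n)) :
    piH n k m (hhHat n k m j) = hh n k m j := PresentedGroup.toGroup.of _

theorem piH_z (n k : ℕ) (m : ℕ → ℕ) : piH n k m (zHat n k m) = 1 :=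
  PresentedGroup.toGroup.of _

def rhoH (n k : ℕ) (m : ℕ → ℕ) :
    GG n k m →* GHat n k m ⧸ Subgroup.zpowers (zHat n k m) :=
  PresentedGroup.toGroup (f := fun x : Fin k ⊕ Fin (2 * n) => match x with
    | .inl i => (QuotientGroup.mk (eeHat n k m i))
    | .inr j => (QuotientGroup.mk (hhHat n k m j)))
    (by
      rintro r ⟨i, rfl⟩
      rw [map_pow, FreeGroup.lift_apply_of]
      show (QuotientGroup.mk (eeHat n k m i)) ^ m i.val = 1
      rw [← QuotientGroup.mk_pow, eeHat_pow]
      exact (QuotientGroup.eq_one_iff _).2 (Subgroup.mem_zpowers _))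

def piH' (n k : ℕ) (m : ℕ → ℕ) :
    (GHat n k m ⧸ Subgroup.zpowers (zHat n k m)) →* GG n k m :=
  QuotientGroup.lift _ (piH n k m) (by
    intro x hx
    obtain ⟨t, rfl⟩ := hx
    show piH n k m (zHat n k m ^ t) = 1
    rw [map_zpow, piH_z, one_zpow])

theorem rhoH_comp_piH (n k : ℕ) (m : ℕ → ℕ) :
    (rhoH n k m).comp (piH n k m) = QuotientGroup.mk' (Subgroup.zpowers (zHat n k m)) := by
  apply PresentedGroup.ext
  rintro ((i | j) | ⟨⟩) <;> simp only [MonoidHom.comp_apply]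
  · exact (congrArg _ (piH_e n k m i)).trans (PresentedGroup.toGroup.of _)
  · exact (congrArg _ (piH_h n k m j)).trans (PresentedGroup.toGroup.of _)
  · refine (congrArg _ (piH_z n k m)).trans ?_
    rw [map_one]
    exact ((QuotientGroup.eq_one_iff _).2 (Subgroup.mem_zpowers _)).symm

theorem piH'_comp_rhoH (n k : ℕ) (m : ℕ → ℕ) :
    (piH' n k m).comp (rhoH n k m) = MonoidHom.id (GG n k m) := by
  apply PresentedGroup.ext
  rintro (i | j) <;> simp only [MonoidHom.comp_apply, MonoidHom.id_apply]
  · exact (congrArg _ (PresentedGroup.toGroup.of _ : rhoH n k m (ee n k m i) = _)).trans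
      (piH_e n k m i)
  · exact (congrArg _ (PresentedGroup.toGroup.of _ : rhoH n k m (hh n k m j) = _)).trans
      (piH_h n k m j)

theorem rhoH_comp_piH' (n k : ℕ) (m : ℕ → ℕ) :
    (rhoH n k m).comp (piH' n k m) =
      MonoidHom.id (GHat n k m ⧸ Subgroup.zpowers (zHat n k m)) := by
  apply QuotientGroup.monoidHom_ext
  rw [MonoidHom.comp_assoc]
  have h1 : (piH' n k m).comp (QuotientGroup.mk' (Subgroup.zpowers (zHat n k m))) =
      piH n k m := by
    ext x
    rfl
  rw [h1, rhoH_comp_piH, MonoidHom.id_comp]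

def QIso (n k : ℕ) (m : ℕ → ℕ) :
    (GHat n k m ⧸ Subgroup.zpowers (zHat n k m)) ≃* GG n k m :=
  MonoidHom.toMulEquiv (piH' n k m) (rhoH n k m) (rhoH_comp_piH' n k m) (piH'_comp_rhoH n k m)

def theta (n k : ℕ) (m : ℕ → ℕ) : GHat n k m →* Multiplicative ℤ :=
  PresentedGroup.toGroup (f := fun x : (Fin k ⊕ Fin (2 * n)) ⊕ Unit => match x with
    | .inl (.inl i) =>
        Multiplicative.ofAdd ((∏ t ∈ Finset.range k, (m t : ℤ)) / (m i.val : ℤ))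
    | .inl (.inr _) => 1
    | .inr _ => Multiplicative.ofAdd (∏ t ∈ Finset.range k, (m t : ℤ)))
    (by
      rintro r (⟨i, rfl⟩ | ⟨j, rfl⟩)
      · rw [map_mul, map_pow, map_inv, FreeGroup.lift_apply_of, FreeGroup.lift_apply_of]
        show Multiplicative.ofAdd ((∏ t ∈ Finset.range k, (m t : ℤ)) / (m i.val : ℤ)) ^
            m i.val *
            (Multiplicative.ofAdd (∏ t ∈ Finset.range k, (m t : ℤ)))⁻¹ = 1
        rw [← ofAdd_nsmul, nsmul_eq_mul]
        have hdvd : ((m i.val : ℤ)) ∣ ∏ t ∈ Finset.range k, (m t : ℤ) :=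
          Finset.dvd_prod_of_mem (fun t => (m t : ℤ)) (Finset.mem_range.2 i.isLt)
        rw [Int.mul_ediv_cancel' hdvd, mul_inv_cancel]
      · rw [map_commutatorElement]
        exact commutatorElement_eq_one_iff_commute.2 (Commute.all _ _))

theorem theta_z (n k : ℕ) (m : ℕ → ℕ) :
    theta n k m (zHat n k m) = Multiplicative.ofAdd (∏ t ∈ Finset.range k, (m t : ℤ)) :=
  PresentedGroup.toGroup.of _

theorem zHat_infinite_order (n k : ℕ) (m : ℕ → ℕ) (hm : ∀ i < k, 2 ≤ m i) :
    ¬IsOfFinOrder (zHat n k m) := by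
  intro hfin
  have hM : (0 : ℤ) < ∏ t ∈ Finset.range k, (m t : ℤ) := by
    refine Finset.prod_pos fun t ht => ?_
    have := hm t (Finset.mem_range.1 ht)
    exact_mod_cast (by omega : 0 < m t)
  have h2 : IsOfFinOrder (theta n k m (zHat n k m)) := MonoidHom.isOfFinOrder _ hfin
  rw [theta_z] at h2
  obtain ⟨s, hs, hpow⟩ := isOfFinOrder_iff_pow_eq_one.1 h2
  rw [← ofAdd_nsmul, nsmul_eq_mul] at hpow
  have h3 : (s : ℤ) * (∏ t ∈ Finset.range k, (m t : ℤ)) = 0 :=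
    Multiplicative.ofAdd.injective (hpow.trans ofAdd_zero.symm)
  have h4 : (0 : ℤ) < (s : ℤ) * (∏ t ∈ Finset.range k, (m t : ℤ)) :=
    mul_pos (by exact_mod_cast hs) hM
  omega

theorem piH_surj (n k : ℕ) (m : ℕ → ℕ) : Function.Surjective (piH n k m) := by
  intro y
  obtain ⟨g, hg⟩ := QuotientGroup.mk'_surjective (Subgroup.zpowers (zHat n k m))
    (rhoH n k m y)
  refine ⟨g, ?_⟩
  have h1 : piH' n k m (rhoH n k m y) = y := DFunLike.congr_fun (piH'_comp_rhoH n k m) y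
  have h2 : piH' n k m (QuotientGroup.mk' (Subgroup.zpowers (zHat n k m)) g) =
      piH n k m g := rfl
  rw [← hg, h2] at h1
  exact h1

theorem ker_piH (n k : ℕ) (m : ℕ → ℕ) {g : GHat n k m} (h : piH n k m g = 1) :
    g ∈ Subgroup.zpowers (zHat n k m) := by
  have h1 : QuotientGroup.mk' (Subgroup.zpowers (zHat n k m)) g = 1 := by
    have h2 := DFunLike.congr_fun (rhoH_comp_piH n k m) g
    rw [MonoidHom.comp_apply, h, map_one] at h2
    exact h2.symm
  exact (QuotientGroup.eq_one_iff g).1 h1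

theorem center_eq (n k : ℕ) (m : ℕ → ℕ) (hk : 1 ≤ k) (hm : ∀ i < k, 2 ≤ m i)
    (hexc1 : ¬(n = 0 ∧ k = 1)) :
    Subgroup.zpowers (zHat n k m) = Subgroup.center (GHat n k m) := by
  apply le_antisymm
  · rintro x ⟨t, rfl⟩
    exact Subgroup.zpow_mem _ (zHat_mem_center n k m) t
  · intro g hg
    apply ker_piH
    refine center_GG n k m hk hm hexc1 ?_
    rw [Subgroup.mem_center_iff]
    intro b
    obtain ⟨a, rfl⟩ := piH_surj n k m b
    rw [← map_mul, Subgroup.mem_center_iff.1 hg a, map_mul]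

end ZHatAux

/-- In `Ĝ`, the element `z` has infinite order, the cyclic subgroup `⟨z⟩` is the center of
`Ĝ`, and the quotient `Ĝ/⟨z⟩` is isomorphic to `G`. -/
theorem zHat_center_and_quotient
    (n k : ℕ) (m : ℕ → ℕ) (hk : 1 ≤ k) (hm : ∀ i < k, 2 ≤ m i)
    (hexc1 : ¬(n = 0 ∧ k = 1)) (hexc2 : ¬(n = 0 ∧ k = 2 ∧ m 0 = 2 ∧ m 1 = 2)) :
    ¬IsOfFinOrder (zHat n k m) ∧
    Subgroup.zpowers (zHat n k m) = Subgroup.center (GHat n k m) ∧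
    Nonempty ((GHat n k m ⧸ Subgroup.center (GHat n k m)) ≃* GG n k m) := by
  have hcen := ZHatAux.center_eq n k m hk hm hexc1
  refine ⟨ZHatAux.zHat_infinite_order n k m hm, hcen, ?_⟩
  exact ⟨(QuotientGroup.quotientMulEquivOfEq hcen.symm).trans (ZHatAux.QIso n k m)⟩
end
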